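/- arXiv:1903.06595 — 7 statements merged into one kernel-verified Lean document; each statement's English description precedes it below -/
import Mathlib

section
/- Let n ≥ 2. Then 2·R_n < T_n, where R_n is the number of chambers of the rank-n resonance arrangement and T_n is the number of chambers of the threshold arrangement in ℝ^{n+1}. (Upper bound of Theorem 1.3: every chamber of the resonance arrangement, viewed as a wall of the threshold arrangement lying in the hyperplane V_∅, lies on the boundary of exactly two threshold chambers, and the inequality is strict.) -/
open Finset

/-- The complement of the resonance arrangement: points of the hyperplane
`V_∅ = {x : Σ x i = 0}` in `ℝ^{n+1}` lying on none of the hyperplanes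
`U'_S = {x ∈ V_∅ : Σ_{i ∈ S} x i = 0}` for nonempty `S ⊆ [n]`
(subsets avoiding the last coordinate). -/
def resCompl (n : ℕ) : Set (Fin (n + 1) → ℝ) :=
  {x | (∑ i, x i = 0) ∧
    ∀ S : Finset (Fin (n + 1)), S.Nonempty → Fin.last n ∉ S → ∑ i ∈ S, x i ≠ 0}

/-- The complement of the threshold arrangement in `ℝ^{n+1}`: points lying on none of
the hyperplanes with normal vector `v_S` (entries `+1` on `S ⊆ [n]`, `-1` elsewhere,
so the last entry is `-1`). -/
def thCompl (n : ℕ) : Set (Fin (n + 1) → ℝ) :=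
  {x | ∀ S : Finset (Fin (n + 1)), Fin.last n ∉ S →
    (∑ i, x i * (if i ∈ S then (1 : ℝ) else -1)) ≠ 0}

def thForm (n : ℕ) (S : Finset (Fin (n + 1))) (x : Fin (n + 1) → ℝ) : ℝ :=
  ∑ i, x i * (if i ∈ S then (1 : ℝ) else -1)

lemma thForm_eq (n : ℕ) (S : Finset (Fin (n + 1))) (x : Fin (n + 1) → ℝ) :
    thForm n S x = 2 * (∑ i ∈ S, x i) - ∑ i, x i := by
  have : ∀ i : Fin (n + 1), x i * (if i ∈ S then (1 : ℝ) else -1)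
      = 2 * (if i ∈ S then x i else 0) - x i := by
    intro i; split_ifs <;> ring
  rw [thForm, Finset.sum_congr rfl fun i _ => this i, Finset.sum_sub_distrib,
    ← Finset.mul_sum, Finset.sum_ite_mem, Finset.univ_inter]

lemma thForm_linear (n : ℕ) (S : Finset (Fin (n + 1))) : IsLinearMap ℝ (thForm n S) := by
  constructor
  · intro a b
    simp only [thForm, Pi.add_apply, add_mul, Finset.sum_add_distrib]
  · intro c a
    simp only [thForm, Pi.smul_apply, smul_eq_mul, Finset.mul_sum, mul_assoc]

lemma resForm_linear (n : ℕ) (S : Finset (Fin (n + 1))) :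
    IsLinearMap ℝ (fun x : Fin (n + 1) → ℝ => ∑ i ∈ S, x i) := by
  constructor
  · intro a b; simp [Finset.sum_add_distrib]
  · intro c a; simp [Finset.mul_sum]

lemma sum_linear (n : ℕ) :
    IsLinearMap ℝ (fun x : Fin (n + 1) → ℝ => ∑ i, x i) := resForm_linear n Finset.univ

def fTh (n : ℕ) : {S : Finset (Fin (n + 1)) // Fin.last n ∉ S} → (Fin (n + 1) → ℝ) → ℝ :=
  fun S x => thForm n S.1 x

def fRes (n : ℕ) : {S : Finset (Fin (n + 1)) // S.Nonempty ∧ Fin.last n ∉ S} →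
    (Fin (n + 1) → ℝ) → ℝ := fun S x => ∑ i ∈ S.1, x i

lemma thCompl_eq (n : ℕ) :
    thCompl n = {x | x ∈ (Set.univ : Set (Fin (n + 1) → ℝ)) ∧ ∀ S, fTh n S x ≠ 0} := by
  ext x
  simp [thCompl, fTh, thForm, Subtype.forall]

lemma resCompl_eq (n : ℕ) :
    resCompl n = {x | x ∈ {y : Fin (n + 1) → ℝ | ∑ i, y i = 0} ∧ ∀ S, fRes n S x ≠ 0} := by
  ext x
  simp [resCompl, fRes, Subtype.forall, and_imp]


noncomputable def signMap {m : ℕ} {ι : Type*} (f : ι → (Fin m → ℝ) → ℝ)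
    (X : Set (Fin m → ℝ)) : ↥X → (ι → Bool) := fun x i => decide (0 < f i x.1)

theorem card_components_eq_card_signs {m : ℕ} {ι : Type*}
    (f : ι → (Fin m → ℝ) → ℝ) (hf : ∀ i, IsLinearMap ℝ (f i))
    {E : Set (Fin m → ℝ)} (hE : Convex ℝ E) {X : Set (Fin m → ℝ)}
    (hX : X = {x | x ∈ E ∧ ∀ i, f i x ≠ 0}) :
    Nat.card (ConnectedComponents ↥X) = Nat.card ↥(Set.range (signMap f X)) := by
  have hmem : ∀ x : ↥X, x.1 ∈ E ∧ ∀ i, f i x.1 ≠ 0 := fun x => by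
    have hx2 := x.2
    simp only [hX, Set.mem_setOf_eq] at hx2
    exact hx2
  have hfc : ∀ i, Continuous (f i) := fun i => by
    have : f i = ⇑(IsLinearMap.mk' (f i) (hf i)) := rfl
    rw [this]; exact LinearMap.continuous_of_finiteDimensional _
  -- sign is constant on connected components
  have key1 : ∀ x y : ↥X, connectedComponent x = connectedComponent y →
      signMap f X x = signMap f X y := by
    intro x y h
    funext i
    set U : Set ↥X := (fun p : ↥X => f i p.1) ⁻¹' Set.Ioi 0 with hU
    set V : Set ↥X := (fun p : ↥X => f i p.1) ⁻¹' Set.Iio 0 with hV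
    have hUo : IsOpen U := isOpen_Ioi.preimage ((hfc i).comp continuous_subtype_val)
    have hVo : IsOpen V := isOpen_Iio.preimage ((hfc i).comp continuous_subtype_val)
    have hdisj : Disjoint U V := by
      rw [Set.disjoint_left]; intro p hp hp'
      have h1 : 0 < f i p.1 := hp
      have h2 : f i p.1 < 0 := hp'
      linarith
    have hsub : connectedComponent x ⊆ U ∪ V := by
      intro p _
      rcases lt_or_gt_of_ne ((hmem p).2 i) with h' | h'
      · exact Or.inr h'
      · exact Or.inl h'
    have hxmem : x ∈ connectedComponent x := mem_connectedComponent
    have hymem : y ∈ connectedComponent x := h ▸ mem_connectedComponent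
    rcases isPreconnected_connectedComponent.subset_or_subset hUo hVo hdisj hsub with hs | hs
    · have h1 : 0 < f i x.1 := hs hxmem
      have h2 : 0 < f i y.1 := hs hymem
      simp [signMap, h1, h2]
    · have h1 : f i x.1 < 0 := hs hxmem
      have h2 : f i y.1 < 0 := hs hymem
      simp [signMap, not_lt_of_gt h1, not_lt_of_gt h2, asymm h1, asymm h2]
  -- same sign implies same component
  have key2 : ∀ x y : ↥X, signMap f X x = signMap f X y →
      connectedComponent x = connectedComponent y := by
    intro x y h
    classical
    set C : Set (Fin m → ℝ) :=
      E ∩ ⋂ i, (if 0 < f i x.1 then {p | 0 < f i p} else {p | f i p < 0}) with hC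
    have hCconv : Convex ℝ C := by
      refine hE.inter (convex_iInter fun i => ?_)
      split_ifs
      · exact convex_halfSpace_gt (hf i) 0
      · exact convex_halfSpace_lt (hf i) 0
    have hxC : x.1 ∈ C := by
      refine ⟨(hmem x).1, Set.mem_iInter.2 fun i => ?_⟩
      split_ifs with h'
      · exact h'
      · exact lt_of_le_of_ne (not_lt.1 h') ((hmem x).2 i)
    have hsigniff : ∀ i, (0 < f i x.1 ↔ 0 < f i y.1) := by
      intro i
      have := congrFun h i
      simpa [signMap, decide_eq_decide] using this
    have hyC : y.1 ∈ C := by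
      refine ⟨(hmem y).1, Set.mem_iInter.2 fun i => ?_⟩
      split_ifs with h'
      · exact (hsigniff i).1 h'
      · exact lt_of_le_of_ne (not_lt.1 (fun hc => h' ((hsigniff i).2 hc))) ((hmem y).2 i)
    have hCX : C ⊆ X := by
      intro p hp
      rw [hX]
      refine ⟨hp.1, fun i => ?_⟩
      have := Set.mem_iInter.1 hp.2 i
      split_ifs at this
      · exact ne_of_gt this
      · exact ne_of_lt this
    have hJ : JoinedIn X x.1 y.1 :=
      ((hCconv.isPathConnected ⟨x.1, hxC⟩).joinedIn x.1 hxC y.1 hyC).mono hCX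
    have hJ' : Joined (⟨x.1, hJ.source_mem⟩ : ↥X) ⟨y.1, hJ.target_mem⟩ := hJ.joined_subtype
    have hxx : (⟨x.1, hJ.source_mem⟩ : ↥X) = x := Subtype.ext rfl
    have hyy : (⟨y.1, hJ.target_mem⟩ : ↥X) = y := Subtype.ext rfl
    rw [hxx, hyy] at hJ'
    have hmemp : y ∈ pathComponent x := hJ'
    have : y ∈ connectedComponent x := pathComponent_subset_component x hmemp
    exact connectedComponent_eq this
  -- the bijection
  let σ' : ↥X → ↥(Set.range (signMap f X)) := fun x => ⟨signMap f X x, Set.mem_range_self x⟩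
  let g : ConnectedComponents ↥X → ↥(Set.range (signMap f X)) :=
    Quotient.lift σ' (fun a b h => Subtype.ext (key1 a b h))
  refine Nat.card_eq_of_bijective g ⟨?_, ?_⟩
  · intro a b
    refine Quotient.inductionOn₂ a b ?_
    intro x y h
    have : signMap f X x = signMap f X y := congrArg Subtype.val h
    exact Quotient.sound (key2 x y this)
  · rintro ⟨v, x, rfl⟩
    exact ⟨Quotient.mk'' x, rfl⟩

noncomputable def eMap (n : ℕ) (v : ↥(Set.range (signMap (fRes n) (resCompl n))))
    (b : Bool) : {S : Finset (Fin (n + 1)) // Fin.last n ∉ S} → Bool :=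
  fun S => if h : S.1.Nonempty then v.1 ⟨S.1, h, S.2⟩ else !b

lemma realize (n : ℕ) (hn : 2 ≤ n)
    (v : ↥(Set.range (signMap (fRes n) (resCompl n)))) (b : Bool) :
    eMap n v b ∈ Set.range (signMap (fTh n) (thCompl n)) := by
  classical
  obtain ⟨x, hx⟩ := v.2
  obtain ⟨hsum, hforms⟩ := x.2
  -- a nonempty index
  have hlast0 : Fin.last n ∉ ({0} : Finset (Fin (n + 1))) := by
    simp only [Finset.mem_singleton]
    intro h
    have := congrArg Fin.val h
    simp [Fin.last] at this
    omega
  have hune : (Finset.univ : Finset {S : Finset (Fin (n + 1)) // S.Nonempty ∧ Fin.last n ∉ S}).Nonempty :=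
    ⟨⟨{0}, Finset.singleton_nonempty _, hlast0⟩, Finset.mem_univ _⟩
  set M : ℝ := Finset.univ.inf' hune (fun j => |∑ i ∈ j.1, x.1 i|) with hMdef
  have hM : 0 < M := by
    rw [Finset.lt_inf'_iff]
    exact fun j _ => abs_pos.2 (hforms j.1 j.2.1 j.2.2)
  have hMle : ∀ j : {S : Finset (Fin (n + 1)) // S.Nonempty ∧ Fin.last n ∉ S},
      M ≤ |∑ i ∈ j.1, x.1 i| := fun j => Finset.inf'_le _ (Finset.mem_univ j)
  set ε : ℝ := M / (2 * (n + 1)) with hεdef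
  have hε : 0 < ε := by positivity
  obtain ⟨t, ht0, htabs, htcase⟩ :
      ∃ t : ℝ, t ≠ 0 ∧ |t| = ε ∧ ((b = true ∧ t = ε) ∨ (b = false ∧ t = -ε)) := by
    rcases b with _ | _
    · exact ⟨-ε, by intro h; rw [neg_eq_zero] at h; exact hε.ne' h,
        by rw [abs_neg, abs_of_pos hε], Or.inr ⟨rfl, rfl⟩⟩
    · exact ⟨ε, hε.ne', abs_of_pos hε, Or.inl ⟨rfl, rfl⟩⟩
  set y : Fin (n + 1) → ℝ := fun i => x.1 i + t with hydef
  have hkey : ∀ S : Finset (Fin (n + 1)),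
      thForm n S y = 2 * (∑ i ∈ S, x.1 i) + (2 * S.card - (n + 1)) * t := by
    intro S
    rw [thForm_eq]
    have h1 : ∑ i ∈ S, y i = (∑ i ∈ S, x.1 i) + S.card * t := by
      simp only [hydef, Finset.sum_add_distrib, Finset.sum_const, nsmul_eq_mul]
    have h2 : ∑ i, y i = (n + 1) * t := by
      simp only [hydef, Finset.sum_add_distrib, hsum, Finset.sum_const, Finset.card_univ,
        Fintype.card_fin, nsmul_eq_mul, zero_add]
      push_cast; ring
    rw [h1, h2]; ring
  have hbound : ∀ S : Finset (Fin (n + 1)), |(2 * (S.card : ℝ) - (n + 1)) * t| ≤ M / 2 := by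
    intro S
    have hc1 : (S.card : ℝ) ≤ n + 1 := by
      have h := Finset.card_le_univ S
      simp only [Finset.card_univ, Fintype.card_fin] at h
      exact_mod_cast h
    have hc0 : (0 : ℝ) ≤ (S.card : ℝ) := Nat.cast_nonneg _
    have habs : |2 * (S.card : ℝ) - (n + 1)| ≤ n + 1 := by
      rw [abs_le]; constructor <;> linarith
    calc |(2 * (S.card : ℝ) - (n + 1)) * t| = |2 * (S.card : ℝ) - (n + 1)| * |t| := abs_mul _ _
      _ ≤ (n + 1) * ε := by
          rw [htabs]
          exact mul_le_mul_of_nonneg_right habs hε.le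
      _ = M / 2 := by
          rw [hεdef]
          field_simp
  have hsign : ∀ S : Finset (Fin (n + 1)), S.Nonempty → Fin.last n ∉ S →
      (0 < thForm n S y ↔ 0 < ∑ i ∈ S, x.1 i) ∧ thForm n S y ≠ 0 := by
    intro S hne hS
    have hMa : M ≤ |∑ i ∈ S, x.1 i| := hMle ⟨S, hne, hS⟩
    have hτ : |(2 * (S.card : ℝ) - (n + 1)) * t| ≤ |∑ i ∈ S, x.1 i| / 2 :=
      le_trans (hbound S) (by linarith)
    have hτ' := abs_le.1 hτ
    rw [hkey S]
    rcases lt_or_gt_of_ne (hforms S hne hS) with ha | ha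
    · rw [abs_of_neg ha] at hτ'
      exact ⟨⟨fun h => by linarith [hτ'.2], fun h => by linarith⟩,
        fun h => by linarith [hτ'.2]⟩
    · rw [abs_of_pos ha] at hτ'
      exact ⟨⟨fun _ => ha, fun _ => by linarith [hτ'.1]⟩,
        fun h => by linarith [hτ'.1]⟩
  have hy : y ∈ thCompl n := by
    intro S hS
    have : (∑ i, y i * (if i ∈ S then (1 : ℝ) else -1)) = thForm n S y := rfl
    rw [this]
    by_cases hne : S.Nonempty
    · exact (hsign S hne hS).2
    · rw [Finset.not_nonempty_iff_eq_empty] at hne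
      subst hne
      rw [hkey]
      simp only [Finset.sum_empty, Finset.card_empty, Nat.cast_zero, mul_zero, zero_add]
      intro h
      have hn1 : (0:ℝ) < n + 1 := by positivity
      rcases mul_eq_zero.1 h with h' | h'
      · linarith
      · exact ht0 h'
  refine ⟨⟨y, hy⟩, ?_⟩
  funext S
  simp only [eMap, signMap, fTh]
  by_cases hne : S.1.Nonempty
  · rw [dif_pos hne, ← hx]
    simp only [signMap, fRes, decide_eq_decide]
    exact decide_eq_decide.2 (hsign S.1 hne S.2).1
  · rw [dif_neg hne]
    rw [Finset.not_nonempty_iff_eq_empty] at hne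
    have hform : thForm n S.1 y = (2 * 0 - ((n:ℝ) + 1)) * t := by
      rw [hkey, hne]; simp
    have hn1 : (0:ℝ) < n + 1 := by positivity
    rcases htcase with ⟨hb, ht⟩ | ⟨hb, ht⟩
    · subst hb
      have hlt : thForm n S.1 y < 0 := by rw [hform, ht]; nlinarith
      simp [not_lt_of_gt hlt]
    · subst hb
      have hgt : (0:ℝ) < thForm n S.1 y := by rw [hform, ht]; nlinarith
      simp [hgt]


noncomputable def zvec (n : ℕ) : Fin (n + 1) → ℝ := fun i => if i = Fin.last n then (n : ℝ) - 1/2 else 1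

lemma zsumS (n : ℕ) (S : Finset (Fin (n + 1))) (hS : Fin.last n ∉ S) :
    ∑ i ∈ S, zvec n i = S.card := by
  rw [Finset.sum_congr rfl fun i hi => by
    unfold zvec
    exact if_neg fun h => hS (by rw [← h]; exact hi)]
  simp

lemma zsum (n : ℕ) : ∑ i, zvec n i = 2 * n - 1/2 := by
  rw [Fin.sum_univ_castSucc]
  rw [Finset.sum_congr rfl fun (i : Fin n) _ => by
    unfold zvec
    exact if_neg (Fin.ne_of_lt (Fin.castSucc_lt_last i))]
  simp [zvec]
  ring

lemma zmem (n : ℕ) : zvec n ∈ thCompl n := by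
  intro S hS
  have : (∑ i, zvec n i * (if i ∈ S then (1 : ℝ) else -1)) = thForm n S (zvec n) := rfl
  rw [this, thForm_eq, zsumS n S hS, zsum n]
  intro h
  have hcast : ((4 * S.card + 1 : ℕ) : ℝ) = ((4 * n : ℕ) : ℝ) := by push_cast; linarith
  have := Nat.cast_inj.mp hcast
  omega


/-- upper bound of Theorem 1.3. For `n ≥ 2`, twice the number `R_n`
of chambers of the rank-`n` resonance arrangement is strictly less than the number
`T_n` of chambers of the threshold arrangement in `ℝ^{n+1}`. -/
theorem two_mul_resonance_lt_threshold (n : ℕ) (hn : 2 ≤ n) :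
    2 * Nat.card (ConnectedComponents ↥(resCompl n)) <
      Nat.card (ConnectedComponents ↥(thCompl n)) := by
  classical
  have e1 := card_components_eq_card_signs (fRes n) (fun S => resForm_linear n S.1)
    (convex_hyperplane (𝕜 := ℝ) (sum_linear n) 0) (resCompl_eq n)
  have e2 := card_components_eq_card_signs (fTh n) (fun S => thForm_linear n S.1)
    (convex_univ (𝕜 := ℝ)) (thCompl_eq n)
  rw [e1, e2]
  set A := Set.range (signMap (fTh n) (thCompl n)) with hA
  set B := Set.range (signMap (fRes n) (resCompl n)) with hB
  let F : ↥B × Bool → ↥A := fun p => ⟨eMap n p.1 p.2, realize n hn p.1 p.2⟩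
  have hFinj : Function.Injective F := by
    rintro ⟨v, b⟩ ⟨v', b'⟩ h
    have h' : eMap n v b = eMap n v' b' := congrArg Subtype.val h
    have hb : b = b' := by
      have hc := congrFun h' ⟨∅, Finset.notMem_empty _⟩
      simp only [eMap] at hc
      rw [dif_neg Finset.not_nonempty_empty, dif_neg Finset.not_nonempty_empty] at hc
      exact Bool.not_inj hc
    have hv : v = v' := by
      apply Subtype.ext
      funext j
      have hc := congrFun h' ⟨j.1, j.2.2⟩
      simp only [eMap] at hc
      rw [dif_pos j.2.1, dif_pos j.2.1] at hc
      exact hc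
    rw [Prod.ext_iff]
    exact ⟨hv, hb⟩
  let w : ↥A := ⟨signMap (fTh n) (thCompl n) ⟨zvec n, zmem n⟩, Set.mem_range_self _⟩
  have hw : w ∉ Set.range F := by
    rintro ⟨⟨v, b⟩, hvb⟩
    have h : eMap n v b = signMap (fTh n) (thCompl n) ⟨zvec n, zmem n⟩ :=
      congrArg Subtype.val hvb
    obtain ⟨x, hx⟩ := v.2
    obtain ⟨hsum, hforms⟩ := x.2
    have h2n : (2 : ℝ) ≤ n := by exact_mod_cast hn
    have hxneg : ∀ i : Fin (n + 1), i ≠ Fin.last n → x.1 i < 0 := by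
      intro i hi
      have hmem : Fin.last n ∉ ({i} : Finset (Fin (n + 1))) := by
        simp only [Finset.mem_singleton]
        exact fun hc => hi hc.symm
      have hc := congrFun h ⟨{i}, hmem⟩
      simp only [eMap] at hc
      rw [dif_pos (Finset.singleton_nonempty i)] at hc
      have hz1 : thForm n {i} (zvec n) < 0 := by
        rw [thForm_eq, zsumS n _ hmem, zsum n]
        simp only [Finset.card_singleton, Nat.cast_one]
        linarith
      have hfalse : v.1 ⟨{i}, Finset.singleton_nonempty i, hmem⟩ = false := by
        rw [hc]
        simp only [signMap, fTh, decide_eq_false_iff_not, not_lt]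
        exact decide_eq_false (not_lt.2 hz1.le)
      rw [← hx] at hfalse
      simp only [signMap, fRes, Finset.sum_singleton, decide_eq_false_iff_not, not_lt] at hfalse
      have hne0 := hforms {i} (Finset.singleton_nonempty i) hmem
      rw [Finset.sum_singleton] at hne0
      exact lt_of_le_of_ne hfalse hne0
    set Ffin : Finset (Fin (n + 1)) := Finset.univ.erase (Fin.last n) with hFfin
    have hFmem : Fin.last n ∉ Ffin := Finset.notMem_erase _ _
    have hFcard : Ffin.card = n := by
      rw [hFfin, Finset.card_erase_of_mem (Finset.mem_univ _), Finset.card_univ,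
        Fintype.card_fin]
      omega
    have hFne : Ffin.Nonempty := Finset.card_pos.1 (by omega)
    have hc := congrFun h ⟨Ffin, hFmem⟩
    simp only [eMap] at hc
    rw [dif_pos hFne] at hc
    have hzF : 0 < thForm n Ffin (zvec n) := by
      rw [thForm_eq, zsumS n _ hFmem, zsum n, hFcard]
      linarith
    have htrue : v.1 ⟨Ffin, hFne, hFmem⟩ = true := by
      rw [hc]
      simp only [signMap, fTh, decide_eq_true_eq]
      exact decide_eq_true hzF
    rw [← hx] at htrue
    simp only [signMap, fRes, decide_eq_true_eq] at htrue
    have hneg : ∑ i ∈ Ffin, x.1 i < 0 :=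
      Finset.sum_neg (fun i hi => hxneg i (Finset.ne_of_mem_erase hi)) hFne
    linarith [of_decide_eq_true htrue]
  haveI : Fintype ↥A := Set.Finite.fintype (Set.toFinite _)
  haveI : Fintype ↥B := Set.Finite.fintype (Set.toFinite _)
  have hlt := Fintype.card_lt_of_injective_of_notMem F hFinj hw
  rw [Nat.card_eq_fintype_card, Nat.card_eq_fintype_card]
  calc 2 * Fintype.card ↥B = Fintype.card (↥B × Bool) := by
        rw [Fintype.card_prod, Fintype.card_bool]; ring
    _ < Fintype.card ↥A := hlt
end

section
/- Let T and T' be alternating trees on [n]. (1) Every nonnegative circulation h on the directed graph C(T,T') induces a point x ∈ 𝒞(T) ∩ 𝒞(T'): namely, x = Σ_{(i,j)∈E(T)} h(i,j)(e_i − e_j) lies in both root cones, where h is restricted to the arcs of C(T,T') coming from T. (2) The intersection 𝒞(T) ∩ 𝒞(T') is full-dimensional (of dimension n − 1) if and only if there exists a strictly positive circulation on C(T,T'). (Lemma 2.10.) -/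
open Finset

/-- The root `e_i - e_j ∈ ℝ^n` associated to the arc `a = (i, j)`. -/
def rootVec (n : ℕ) (a : Fin n × Fin n) : Fin n → ℝ :=
  fun k => (if k = a.1 then 1 else 0) - (if k = a.2 then 1 else 0)

/-- The underlying undirected (simple) graph of the directed graph on `[n]`
with arc set `E`. -/
def underlying (n : ℕ) (E : Finset (Fin n × Fin n)) : SimpleGraph (Fin n) where
  Adj i j := i ≠ j ∧ ((i, j) ∈ E ∨ (j, i) ∈ E)
  symm := ⟨fun _ _ h => ⟨h.1.symm, h.2.symm⟩⟩
  loopless := ⟨fun _ h => h.1 rfl⟩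

/-- A directed graph on `[n]` is alternating if every vertex is a source
(no incoming arcs) or a sink (no outgoing arcs). -/
def IsAlternating (n : ℕ) (E : Finset (Fin n × Fin n)) : Prop :=
  ∀ v : Fin n, (∀ a ∈ E, a.2 ≠ v) ∨ (∀ a ∈ E, a.1 ≠ v)

/-- An alternating tree on `[n]`: an alternating directed graph whose underlying
undirected graph is a tree. -/
def IsAltTree (n : ℕ) (E : Finset (Fin n × Fin n)) : Prop :=
  IsAlternating n E ∧ (underlying n E).IsTree

/-- The root cone of a directed graph `G` on `[n]` with arc set `E`: all points
induced by nonnegative flows on the arcs, `Σ_{(i,j) ∈ E} f(i,j)(e_i - e_j)`. -/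
def rootCone (n : ℕ) (E : Finset (Fin n × Fin n)) : Set (Fin n → ℝ) :=
  {x | ∃ f : Fin n × Fin n → ℝ, (∀ a, 0 ≤ f a) ∧ x = ∑ a ∈ E, f a • rootVec n a}

/-- The directed graph `C(T,T')` on `[n]`: the arcs of `T` together with the
reversed arcs of `T'`. -/
def ctt (n : ℕ) (E E' : Finset (Fin n × Fin n)) : Finset (Fin n × Fin n) :=
  E ∪ E'.image Prod.swap

/-- A nonnegative circulation on the directed graph with arc set `F`:
a nonnegative labeling of arcs satisfying conservation of flow at each vertex. -/
def IsCirculation (n : ℕ) (F : Finset (Fin n × Fin n)) (h : Fin n × Fin n → ℝ) : Prop :=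
  (∀ a ∈ F, 0 ≤ h a) ∧
  ∀ v : Fin n, ∑ a ∈ F.filter (fun a => a.1 = v), h a
    = ∑ a ∈ F.filter (fun a => a.2 = v), h a

section Helpers

variable {n : ℕ}

lemma rootVec_swap (a : Fin n × Fin n) : rootVec n (Prod.swap a) = - rootVec n a := by
  funext k; simp only [rootVec, Prod.fst_swap, Prod.snd_swap, Pi.neg_apply]; ring

lemma sum_rootVec_coords (a : Fin n × Fin n) : ∑ k, rootVec n a k = 0 := by
  simp [rootVec, Finset.sum_sub_distrib]

lemma flow_apply (F : Finset (Fin n × Fin n)) (h : Fin n × Fin n → ℝ) (v : Fin n) :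
    (∑ a ∈ F, h a • rootVec n a) v
      = ∑ a ∈ F.filter (fun a => a.1 = v), h a - ∑ a ∈ F.filter (fun a => a.2 = v), h a := by
  rw [Finset.sum_apply]
  simp only [Pi.smul_apply, rootVec, smul_eq_mul, mul_sub, mul_ite, mul_one, mul_zero]
  rw [Finset.sum_sub_distrib]
  congr 1 <;> rw [Finset.sum_filter] <;>
    exact Finset.sum_congr rfl (fun a _ => by simp only [eq_comm])

lemma conserve_iff (F : Finset (Fin n × Fin n)) (h : Fin n × Fin n → ℝ) :
    (∀ v : Fin n, ∑ a ∈ F.filter (fun a => a.1 = v), h a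
        = ∑ a ∈ F.filter (fun a => a.2 = v), h a)
      ↔ ∑ a ∈ F, h a • rootVec n a = 0 := by
  constructor
  · intro H; funext v
    rw [Pi.zero_apply, flow_apply, H v, sub_self]
  · intro H v
    have := congrFun H v
    rw [flow_apply, Pi.zero_apply, sub_eq_zero] at this
    exact this

lemma alt_not_swap_mem {E : Finset (Fin n × Fin n)} (hE : IsAlternating n E)
    {a : Fin n × Fin n} (ha : a ∈ E) : Prod.swap a ∉ E := by
  intro hsw
  rcases hE a.1 with H | H
  · exact H _ hsw rfl
  · exact H _ ha rfl

lemma alt_ne {E : Finset (Fin n × Fin n)} (hE : IsAlternating n E)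
    {a : Fin n × Fin n} (ha : a ∈ E) : a.1 ≠ a.2 := by
  rcases hE a.1 with H | H
  · intro h; exact H a ha h.symm
  · exact absurd rfl (H a ha)

lemma mem_image_swap {E' : Finset (Fin n × Fin n)} {p : Fin n × Fin n} :
    p ∈ E'.image Prod.swap ↔ Prod.swap p ∈ E' := by
  constructor
  · intro hp
    obtain ⟨b, hb, rfl⟩ := Finset.mem_image.mp hp
    simpa using hb
  · intro hp
    exact Finset.mem_image.mpr ⟨_, hp, Prod.swap_swap p⟩

lemma sum_image_swap (s : Finset (Fin n × Fin n)) (w : Fin n × Fin n → ℝ) :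
    ∑ p ∈ s.image Prod.swap, w p • rootVec n p
      = - ∑ b ∈ s, w (Prod.swap b) • rootVec n b := by
  rw [Finset.sum_image (fun x _ y _ h => Prod.swap_injective h), ← Finset.sum_neg_distrib]
  exact Finset.sum_congr rfl fun b _ => by rw [rootVec_swap, smul_neg]

noncomputable def sumCoord (n : ℕ) : (Fin n → ℝ) →ₗ[ℝ] ℝ := ∑ i, LinearMap.proj i

lemma sumCoord_apply (x : Fin n → ℝ) : sumCoord n x = ∑ i, x i := by
  simp [sumCoord]

lemma rootVec_mem_ker (a : Fin n × Fin n) : rootVec n a ∈ LinearMap.ker (sumCoord n) := by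
  rw [LinearMap.mem_ker, sumCoord_apply]; exact sum_rootVec_coords a

lemma rootCone_subset_ker (E : Finset (Fin n × Fin n)) :
    ∀ x ∈ rootCone n E, x ∈ LinearMap.ker (sumCoord n) := by
  rintro x ⟨f, -, rfl⟩
  exact Submodule.sum_mem _ fun a _ => Submodule.smul_mem _ _ (rootVec_mem_ker a)

lemma finrank_ker_sumCoord (hn : 0 < n) :
    Module.finrank ℝ (LinearMap.ker (sumCoord n)) = n - 1 := by
  have hsurj : LinearMap.range (sumCoord n) = ⊤ := by
    rw [LinearMap.range_eq_top]
    intro r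
    refine ⟨Pi.single ⟨0, hn⟩ r, ?_⟩
    rw [sumCoord_apply]
    simp
  have h2 := LinearMap.finrank_range_add_finrank_ker (sumCoord n)
  rw [hsurj, finrank_top, Module.finrank_self, Module.finrank_fin_fun] at h2
  omega



lemma span_roots_of_tree {E : Finset (Fin n × Fin n)} (hT : IsAltTree n E) :
    Submodule.span ℝ (rootVec n '' ↑E) = LinearMap.ker (sumCoord n) := by
  classical
  have hconn := hT.2.isConnected
  apply le_antisymm
  · rw [Submodule.span_le]
    rintro x ⟨a, -, rfl⟩
    exact rootVec_mem_ker a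
  · have key : ∀ i j : Fin n, rootVec n (i, j) ∈ Submodule.span ℝ (rootVec n '' ↑E) := by
      intro i j
      obtain ⟨w⟩ := hconn i j
      induction w with
      | nil =>
        rename_i u
        have h0 : rootVec n (u, u) = 0 := by funext k; simp [rootVec]
        rw [h0]; exact Submodule.zero_mem _
      | @cons i k j hadj p ih =>
        have hsplit : rootVec n (i, j) = rootVec n (i, k) + rootVec n (k, j) := by
          funext m; simp only [rootVec, Pi.add_apply]; ring
        rw [hsplit]
        refine Submodule.add_mem _ ?_ ih
        have hadj' : i ≠ k ∧ ((i, k) ∈ E ∨ (k, i) ∈ E) := hadj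
        rcases hadj'.2 with hik | hki
        · exact Submodule.subset_span ⟨(i, k), hik, rfl⟩
        · have : rootVec n (i, k) = - rootVec n (k, i) := by
            rw [← rootVec_swap]; rfl
          rw [this]
          exact Submodule.neg_mem _ (Submodule.subset_span ⟨(k, i), hki, rfl⟩)
    intro x hx
    have hx0 : ∑ i, x i = 0 := by
      rw [← sumCoord_apply]; exact hx
    have hne : Nonempty (Fin n) := hconn.nonempty
    obtain ⟨v0⟩ := hne
    have hxrep : x = ∑ v, x v • rootVec n (v, v0) := by
      funext k
      rw [Finset.sum_apply]
      simp only [Pi.smul_apply, rootVec, smul_eq_mul, mul_sub, mul_ite, mul_one, mul_zero]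
      rw [Finset.sum_sub_distrib]
      by_cases hk : k = v0 <;> simp [hk, hx0, Finset.sum_ite_eq]
    rw [hxrep]
    exact Submodule.sum_mem _ fun v _ => Submodule.smul_mem _ _ (key v v0)

lemma card_tree {E : Finset (Fin n × Fin n)} (hT : IsAltTree n E) : E.card = n - 1 := by
  classical
  have hcard := hT.2.card_edgeFinset
  rw [Fintype.card_fin] at hcard
  have hbij : E.card = (underlying n E).edgeFinset.card := by
    refine Finset.card_bij (fun a _ => Sym2.mk a.1 a.2) ?_ ?_ ?_
    · intro a ha
      rw [SimpleGraph.mem_edgeFinset, SimpleGraph.mem_edgeSet]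
      exact ⟨alt_ne hT.1 ha, Or.inl ha⟩
    · intro a ha b hb hab
      rcases Sym2.mk_eq_mk_iff.mp hab with h | h
      · exact h
      · exact absurd (h ▸ ha) (alt_not_swap_mem hT.1 hb)
    · intro e
      refine Sym2.ind (fun i j he => ?_) e
      rw [SimpleGraph.mem_edgeFinset, SimpleGraph.mem_edgeSet] at he
      obtain ⟨hne, hij | hji⟩ := he
      · exact ⟨(i, j), hij, rfl⟩
      · exact ⟨(j, i), hji, Sym2.eq_swap⟩
  omega

lemma range_restrict_roots (E : Finset (Fin n × Fin n)) :
    Set.range (fun p : ↥E => rootVec n ↑p) = rootVec n '' ↑E := by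
  ext y
  constructor
  · rintro ⟨⟨a, ha⟩, rfl⟩; exact ⟨a, ha, rfl⟩
  · rintro ⟨a, ha, rfl⟩; exact ⟨⟨a, ha⟩, rfl⟩

lemma linIndep_roots {E : Finset (Fin n × Fin n)} (hT : IsAltTree n E) :
    LinearIndependent ℝ (fun p : ↥E => rootVec n ↑p) := by
  classical
  rw [linearIndependent_iff_card_eq_finrank_span]
  rw [range_restrict_roots, Set.finrank]
  rw [span_roots_of_tree hT]
  have hn : 0 < n := Fin.pos_iff_nonempty.mpr hT.2.isConnected.nonempty
  rw [finrank_ker_sumCoord hn, Fintype.card_coe, card_tree hT]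

lemma mem_span_roots_iff {E : Finset (Fin n × Fin n)} {x : Fin n → ℝ} :
    x ∈ Submodule.span ℝ (rootVec n '' ↑E)
      ↔ ∃ c : (Fin n × Fin n) → ℝ, x = ∑ b ∈ E, c b • rootVec n b := by
  classical
  constructor
  · intro hx
    rw [← range_restrict_roots] at hx
    obtain ⟨c, hc⟩ := (Submodule.mem_span_range_iff_exists_fun ℝ).mp hx
    refine ⟨fun p => if hp : p ∈ E then c ⟨p, hp⟩ else 0, ?_⟩
    rw [← hc, Finset.univ_eq_attach, ← Finset.sum_attach E
      (fun b => (if hp : b ∈ E then c ⟨b, hp⟩ else 0) • rootVec n b)]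
    exact Finset.sum_congr rfl fun p _ => by rw [dif_pos p.2]
  · rintro ⟨c, rfl⟩
    exact Submodule.sum_mem _ fun b hb =>
      Submodule.smul_mem _ _ (Submodule.subset_span ⟨b, hb, rfl⟩)

lemma mem_ctt {E E' : Finset (Fin n × Fin n)} {p : Fin n × Fin n} :
    p ∈ ctt n E E' ↔ p ∈ E ∨ Prod.swap p ∈ E' :=
  Finset.mem_union.trans (or_congr Iff.rfl mem_image_swap)

lemma filter_swap_mem (E E' : Finset (Fin n × Fin n)) :
    (ctt n E E').filter (fun p => Prod.swap p ∈ E') = E'.image Prod.swap := by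
  ext p
  simp only [Finset.mem_filter, mem_image_swap, ctt, Finset.mem_union]
  constructor
  · rintro ⟨-, h2⟩; exact h2
  · intro h1; exact ⟨Or.inr h1, h1⟩

lemma circ_sum_zero {F : Finset (Fin n × Fin n)} {h : Fin n × Fin n → ℝ}
    (hc : IsCirculation n F h) : ∑ a ∈ F, h a • rootVec n a = 0 :=
  (conserve_iff F h).mp hc.2

lemma part1_lemma (E E' : Finset (Fin n × Fin n)) (h : Fin n × Fin n → ℝ)
    (hc : IsCirculation n (ctt n E E') h) :
    (∑ a ∈ E, h a • rootVec n a) ∈ rootCone n E ∩ rootCone n E' := by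
  classical
  have hzero := circ_sum_zero hc
  have hEF : E ⊆ ctt n E E' := Finset.subset_union_left
  constructor
  · refine ⟨fun a => if a ∈ E then h a else 0, fun a => ?_, ?_⟩
    · beta_reduce
      split_ifs with hb
      · exact hc.1 _ (hEF hb)
      · exact le_refl 0
    · exact (Finset.sum_congr rfl fun a ha => by beta_reduce; rw [if_pos ha]).symm
  · refine ⟨fun b => if b ∈ E' ∧ Prod.swap b ∉ E then h (Prod.swap b) else 0,
      fun b => ?_, ?_⟩
    · beta_reduce
      split_ifs with hb
      · exact hc.1 _ (Finset.subset_union_right (mem_image_swap.mpr hb.1))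
      · exact le_refl 0
    · beta_reduce
      have e1 : ∑ b ∈ E', (if b ∈ E' ∧ Prod.swap b ∉ E then h (Prod.swap b) else 0) • rootVec n b
          = ∑ b ∈ E'.filter (fun b => Prod.swap b ∉ E), h (Prod.swap b) • rootVec n b := by
        rw [Finset.sum_filter]
        refine Finset.sum_congr rfl fun b hb => ?_
        by_cases h1 : Prod.swap b ∈ E <;> simp [h1, hb]
      have e3 : (E'.filter (fun b => Prod.swap b ∉ E)).image Prod.swap = ctt n E E' \ E := by
        ext p
        rw [mem_image_swap, Finset.mem_filter, Finset.mem_sdiff, mem_ctt, Prod.swap_swap]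
        constructor
        · rintro ⟨h1, h2⟩; exact ⟨Or.inr h1, h2⟩
        · rintro ⟨h1 | h1, h2⟩
          · exact absurd h1 h2
          · exact ⟨h1, h2⟩
      have e2 := sum_image_swap (E'.filter (fun b => Prod.swap b ∉ E)) h
      have e4 := Finset.sum_sdiff_eq_sub (f := fun p => h p • rootVec n p) hEF
      rw [hzero, zero_sub] at e4
      rw [← e3, e2] at e4
      rw [e1]
      exact (neg_injective e4).symm

lemma pos_circ_rep (E E' : Finset (Fin n × Fin n)) (h : Fin n × Fin n → ℝ)
    (hc : IsCirculation n (ctt n E E') h)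
    (hpos : ∀ a ∈ ctt n E E', 0 < h a) :
    ∃ f g : Fin n × Fin n → ℝ, (∀ p, 0 ≤ f p) ∧ (∀ p, 0 ≤ g p) ∧
      (∀ p ∈ E, 0 < f p) ∧ (∀ b ∈ E', 0 < g b) ∧
      ∑ p ∈ E, f p • rootVec n p = ∑ b ∈ E', g b • rootVec n b := by
  classical
  refine ⟨fun p => if p ∈ E then (if Prod.swap p ∈ E' then h p / 2 else h p) else 0,
    fun b => if b ∈ E' then (if Prod.swap b ∈ E then h (Prod.swap b) / 2 else h (Prod.swap b)) else 0,
    ?_, ?_, ?_, ?_, ?_⟩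
  · intro p
    beta_reduce
    split_ifs with h1 h2
    · have := hpos p (mem_ctt.mpr (Or.inl h1)); linarith
    · exact (hpos p (mem_ctt.mpr (Or.inl h1))).le
    · exact le_refl 0
  · intro b
    beta_reduce
    split_ifs with h1 h2
    · have := hpos (Prod.swap b) (mem_ctt.mpr (Or.inr (by rwa [Prod.swap_swap]))); linarith
    · exact (hpos (Prod.swap b) (mem_ctt.mpr (Or.inr (by rwa [Prod.swap_swap])))).le
    · exact le_refl 0
  · intro p hp
    beta_reduce
    rw [if_pos hp]
    have := hpos p (mem_ctt.mpr (Or.inl hp))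
    split_ifs <;> linarith
  · intro b hb
    beta_reduce
    rw [if_pos hb]
    have := hpos (Prod.swap b) (mem_ctt.mpr (Or.inr (by rwa [Prod.swap_swap])))
    split_ifs <;> linarith
  · -- main equality
    beta_reduce
    set img := E'.image Prod.swap with himg
    have hzero : ∑ p ∈ E ∪ img, h p • rootVec n p = 0 := circ_sum_zero hc
    set A := ∑ p ∈ E ∩ img, (h p / 2) • rootVec n p with hA
    have s1 : ∑ b ∈ E', (if b ∈ E' then (if Prod.swap b ∈ E then h (Prod.swap b) / 2 else h (Prod.swap b)) else 0) • rootVec n b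
        = - ∑ p ∈ img, (if Prod.swap p ∈ E' then (if Prod.swap (Prod.swap p) ∈ E then h (Prod.swap (Prod.swap p)) / 2 else h (Prod.swap (Prod.swap p))) else 0) • rootVec n p := by
      rw [himg, sum_image_swap E' (fun p => if Prod.swap p ∈ E' then (if Prod.swap (Prod.swap p) ∈ E then h (Prod.swap (Prod.swap p)) / 2 else h (Prod.swap (Prod.swap p))) else 0), neg_neg]
      exact Finset.sum_congr rfl fun b hb => rfl
    rw [s1, eq_neg_iff_add_eq_zero]
    have c1 : ∑ p ∈ E, (if p ∈ E then (if Prod.swap p ∈ E' then h p / 2 else h p) else 0) • rootVec n p + A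
        = ∑ p ∈ E, h p • rootVec n p := by
      have hA2 : A = ∑ p ∈ E, (if p ∈ img then (h p / 2) • rootVec n p else 0) := by
        rw [hA, ← Finset.sum_filter, Finset.filter_mem_eq_inter]
      rw [hA2, ← Finset.sum_add_distrib]
      refine Finset.sum_congr rfl fun p hp => ?_
      rw [if_pos hp]
      by_cases hpi : p ∈ img
      · rw [if_pos hpi, if_pos (mem_image_swap.mp hpi), ← add_smul, add_halves]
      · rw [if_neg hpi, add_zero,
          if_neg (fun hs => hpi (mem_image_swap.mpr hs))]
    have c2 : ∑ p ∈ img, (if Prod.swap p ∈ E' then (if Prod.swap (Prod.swap p) ∈ E then h (Prod.swap (Prod.swap p)) / 2 else h (Prod.swap (Prod.swap p))) else 0) • rootVec n p + A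
        = ∑ p ∈ img, h p • rootVec n p := by
      have hA2 : A = ∑ p ∈ img, (if p ∈ E then (h p / 2) • rootVec n p else 0) := by
        rw [hA, ← Finset.sum_filter, Finset.filter_mem_eq_inter, Finset.inter_comm]
      rw [hA2, ← Finset.sum_add_distrib]
      refine Finset.sum_congr rfl fun p hp => ?_
      rw [if_pos (mem_image_swap.mp hp), Prod.swap_swap]
      by_cases hpE : p ∈ E
      · rw [if_pos hpE, if_pos hpE, ← add_smul, add_halves]
      · rw [if_neg hpE, if_neg hpE, add_zero]
    have c3 : A + A = ∑ p ∈ E ∩ img, h p • rootVec n p := by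
      rw [hA, ← Finset.sum_add_distrib]
      exact Finset.sum_congr rfl fun p _ => by rw [← add_smul, add_halves]
    have sui := Finset.sum_union_inter (s₁ := E) (s₂ := img)
      (f := fun p => h p • rootVec n p)
    linear_combination (norm := abel) c1 + c2 - c3 - sui + hzero

lemma span_inter_eq {E E' : Finset (Fin n × Fin n)}
    (hT : IsAltTree n E) (hT' : IsAltTree n E')
    (hex : ∃ h : Fin n × Fin n → ℝ, IsCirculation n (ctt n E E') h ∧
      ∀ a ∈ ctt n E E', 0 < h a) :
    Submodule.span ℝ (rootCone n E ∩ rootCone n E') = LinearMap.ker (sumCoord n) := by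
  classical
  obtain ⟨h, hc, hpos⟩ := hex
  obtain ⟨f, g, hf0, hg0, hfpos, hgpos, hrep⟩ := pos_circ_rep E E' h hc hpos
  have hx'E : (∑ p ∈ E, f p • rootVec n p) ∈ rootCone n E := ⟨f, hf0, rfl⟩
  have hx'E' : (∑ p ∈ E, f p • rootVec n p) ∈ rootCone n E' := ⟨g, hg0, hrep⟩
  apply le_antisymm
  · rw [Submodule.span_le]
    intro x hx
    exact rootCone_subset_ker E x hx.1
  · rw [← span_roots_of_tree hT, Submodule.span_le]
    rintro y ⟨a, haE, rfl⟩
    rw [Finset.mem_coe] at haE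
    have hRa : rootVec n a ∈ Submodule.span ℝ (rootVec n '' ↑E') := by
      rw [span_roots_of_tree hT']; exact rootVec_mem_ker a
    obtain ⟨c, hcrep⟩ := mem_span_roots_iff.mp hRa
    have hn2 : (1:ℕ) < n := by
      have hne := alt_ne hT.1 haE
      have : Nontrivial (Fin n) := ⟨a.1, a.2, hne⟩
      simpa using Fintype.one_lt_card (α := Fin n)
    have hE'ne : E'.Nonempty := Finset.card_pos.mp (by rw [card_tree hT']; omega)
    have hsne : (E'.image (fun b => g b / (|c b| + 1))).Nonempty := hE'ne.image _
    set ε := (E'.image (fun b => g b / (|c b| + 1))).min' hsne with hε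
    have hεpos : 0 < ε := by
      obtain ⟨b, hb, hbe⟩ := Finset.mem_image.mp ((E'.image _).min'_mem hsne)
      rw [hε, ← hbe]
      have := hgpos b hb
      positivity
    have hεle : ∀ b ∈ E', ε * (|c b| + 1) ≤ g b := by
      intro b hb
      have h1 : ε ≤ g b / (|c b| + 1) :=
        Finset.min'_le _ _ (Finset.mem_image_of_mem _ hb)
      have h2 : (0:ℝ) < |c b| + 1 := by positivity
      calc ε * (|c b| + 1) ≤ (g b / (|c b| + 1)) * (|c b| + 1) := by nlinarith
        _ = g b := div_mul_cancel₀ _ h2.ne'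
    have hbound : ∀ b ∈ E', 0 ≤ g b + ε * c b := by
      intro b hb
      have h1 := hεle b hb
      have h3 := neg_abs_le (c b)
      have h4 := abs_nonneg (c b)
      nlinarith [hεpos]
    have hyE : (∑ p ∈ E, f p • rootVec n p) + ε • rootVec n a ∈ rootCone n E := by
      refine ⟨fun p => f p + (if p = a then ε else 0), fun p => ?_, ?_⟩
      · beta_reduce
        have := hf0 p
        split_ifs <;> linarith
      · have e1 : ∑ p ∈ E, (f p + if p = a then ε else 0) • rootVec n p
            = ∑ p ∈ E, f p • rootVec n p + ∑ p ∈ E, (if p = a then ε else 0) • rootVec n p := by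
          rw [← Finset.sum_add_distrib]
          exact Finset.sum_congr rfl fun p _ => add_smul _ _ _
        rw [e1]
        congr 1
        have e2 : ∑ p ∈ E, (if p = a then ε else 0) • rootVec n p
            = ∑ p ∈ E, (if p = a then ε • rootVec n p else 0) :=
          Finset.sum_congr rfl fun p _ => by split_ifs <;> simp
        rw [e2, Finset.sum_ite_eq' E a (fun p => ε • rootVec n p), if_pos haE]
    have hyE' : (∑ p ∈ E, f p • rootVec n p) + ε • rootVec n a ∈ rootCone n E' := by
      refine ⟨fun b => if b ∈ E' then g b + ε * c b else 0, fun b => ?_, ?_⟩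
      · beta_reduce
        split_ifs with hb
        · exact hbound b hb
        · exact le_refl 0
      · have e : ∑ b ∈ E', (if b ∈ E' then g b + ε * c b else 0) • rootVec n b
            = ∑ b ∈ E', (g b • rootVec n b + ε • (c b • rootVec n b)) := by
          refine Finset.sum_congr rfl fun b hb => ?_
          rw [if_pos hb, add_smul, mul_smul]
        rw [e, Finset.sum_add_distrib, ← Finset.smul_sum, ← hcrep, ← hrep]
    have hfin : rootVec n a
        = ε⁻¹ • (((∑ p ∈ E, f p • rootVec n p) + ε • rootVec n a) - ∑ p ∈ E, f p • rootVec n p) := by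
      rw [add_sub_cancel_left, smul_smul, inv_mul_cancel₀ hεpos.ne', one_smul]
    rw [hfin]
    exact Submodule.smul_mem _ _ (Submodule.sub_mem _
      (Submodule.subset_span ⟨hyE, hyE'⟩) (Submodule.subset_span ⟨hx'E, hx'E'⟩))

lemma exists_pos_coord {E E' : Finset (Fin n × Fin n)}
    (hT : IsAltTree n E)
    (heq : Submodule.span ℝ (rootCone n E ∩ rootCone n E') = LinearMap.ker (sumCoord n)) :
    ∀ a : Fin n × Fin n, ∃ f g : Fin n × Fin n → ℝ, (∀ p, 0 ≤ f p) ∧ (∀ p, 0 ≤ g p) ∧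
      (∑ p ∈ E, f p • rootVec n p = ∑ b ∈ E', g b • rootVec n b) ∧ (a ∈ E → 0 < f a) := by
  classical
  intro a
  by_cases ha : a ∈ E
  swap
  · exact ⟨0, 0, fun _ => le_refl 0, fun _ => le_refl 0, by simp, fun h => absurd h ha⟩
  by_contra hcon
  push_neg at hcon
  have hsub : ∀ x ∈ rootCone n E ∩ rootCone n E',
      x ∈ Submodule.span ℝ (rootVec n '' (↑E \ {a})) := by
    rintro x ⟨⟨f, hf, hfx⟩, ⟨g, hg, hgx⟩⟩
    have hfa : f a = 0 :=
      le_antisymm ((hcon f g hf hg (hfx.symm.trans hgx)).2) (hf a)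
    have hx2 : x = ∑ p ∈ E.erase a, f p • rootVec n p := by
      rw [hfx]
      exact (Finset.sum_erase _ (by rw [hfa, zero_smul])).symm
    rw [hx2]
    refine Submodule.sum_mem _ fun p hp => Submodule.smul_mem _ _ (Submodule.subset_span ?_)
    obtain ⟨hpa, hpE⟩ := Finset.mem_erase.mp hp
    exact ⟨p, ⟨hpE, hpa⟩, rfl⟩
  have hRa : rootVec n a ∈ Submodule.span ℝ (rootVec n '' (↑E \ {a})) := by
    have h1 : rootVec n a ∈ Submodule.span ℝ (rootCone n E ∩ rootCone n E') := by
      rw [heq]; exact rootVec_mem_ker a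
    exact Submodule.span_le.mpr hsub h1
  have hli := linIndep_roots hT
  have hnot := hli.notMem_span_image
    (s := {p : ↥E | (p : Fin n × Fin n) ≠ a}) (x := ⟨a, ha⟩) (by simp)
  apply hnot
  have himg : (fun p : ↥E => rootVec n ↑p) '' {p : ↥E | (p : Fin n × Fin n) ≠ a}
      = rootVec n '' (↑E \ {a}) := by
    ext y
    constructor
    · rintro ⟨⟨p, hp⟩, hps, rfl⟩
      exact ⟨p, ⟨hp, hps⟩, rfl⟩
    · rintro ⟨p, ⟨hp, hpa⟩, rfl⟩
      exact ⟨⟨p, hp⟩, hpa, rfl⟩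
  rw [himg]
  exact hRa

lemma exists_pos_coord' {E E' : Finset (Fin n × Fin n)}
    (hT' : IsAltTree n E')
    (heq : Submodule.span ℝ (rootCone n E ∩ rootCone n E') = LinearMap.ker (sumCoord n)) :
    ∀ a : Fin n × Fin n, ∃ f g : Fin n × Fin n → ℝ, (∀ p, 0 ≤ f p) ∧ (∀ p, 0 ≤ g p) ∧
      (∑ p ∈ E, f p • rootVec n p = ∑ b ∈ E', g b • rootVec n b) ∧ (a ∈ E' → 0 < g a) := by
  classical
  intro a
  by_cases ha : a ∈ E'
  swap
  · exact ⟨0, 0, fun _ => le_refl 0, fun _ => le_refl 0, by simp, fun h => absurd h ha⟩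
  by_contra hcon
  push_neg at hcon
  have hsub : ∀ x ∈ rootCone n E ∩ rootCone n E',
      x ∈ Submodule.span ℝ (rootVec n '' (↑E' \ {a})) := by
    rintro x ⟨⟨f, hf, hfx⟩, ⟨g, hg, hgx⟩⟩
    have hga : g a = 0 :=
      le_antisymm ((hcon f g hf hg (hfx.symm.trans hgx)).2) (hg a)
    have hx2 : x = ∑ p ∈ E'.erase a, g p • rootVec n p := by
      rw [hgx]
      exact (Finset.sum_erase _ (by rw [hga, zero_smul])).symm
    rw [hx2]
    refine Submodule.sum_mem _ fun p hp => Submodule.smul_mem _ _ (Submodule.subset_span ?_)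
    obtain ⟨hpa, hpE⟩ := Finset.mem_erase.mp hp
    exact ⟨p, ⟨hpE, hpa⟩, rfl⟩
  have hRa : rootVec n a ∈ Submodule.span ℝ (rootVec n '' (↑E' \ {a})) := by
    have h1 : rootVec n a ∈ Submodule.span ℝ (rootCone n E ∩ rootCone n E') := by
      rw [heq]; exact rootVec_mem_ker a
    exact Submodule.span_le.mpr hsub h1
  have hli := linIndep_roots hT'
  have hnot := hli.notMem_span_image
    (s := {p : ↥E' | (p : Fin n × Fin n) ≠ a}) (x := ⟨a, ha⟩) (by simp)
  apply hnot
  have himg : (fun p : ↥E' => rootVec n ↑p) '' {p : ↥E' | (p : Fin n × Fin n) ≠ a}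
      = rootVec n '' (↑E' \ {a}) := by
    ext y
    constructor
    · rintro ⟨⟨p, hp⟩, hps, rfl⟩
      exact ⟨p, ⟨hp, hps⟩, rfl⟩
    · rintro ⟨p, ⟨hp, hpa⟩, rfl⟩
      exact ⟨⟨p, hp⟩, hpa, rfl⟩
  rw [himg]
  exact hRa


/-- Lemma 2.10. Let `T, T'` be alternating trees on `[n]` with arc
sets `E, E'`. (1) Every nonnegative circulation `h` on `C(T,T')` induces a point
`x = Σ_{(i,j) ∈ E(T)} h(i,j)(e_i - e_j)` lying in `𝒞(T) ∩ 𝒞(T')`. (2) The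
intersection `𝒞(T) ∩ 𝒞(T')` is full-dimensional (of dimension `n - 1`) if and only
if there exists a strictly positive circulation on `C(T,T')`. -/
theorem circulation_and_full_dim (n : ℕ) (E E' : Finset (Fin n × Fin n))
    (hT : IsAltTree n E) (hT' : IsAltTree n E') :
    (∀ h : Fin n × Fin n → ℝ, IsCirculation n (ctt n E E') h →
      (∑ a ∈ E, h a • rootVec n a) ∈ rootCone n E ∩ rootCone n E') ∧
    (Module.finrank ℝ (Submodule.span ℝ (rootCone n E ∩ rootCone n E')) = n - 1 ↔
      ∃ h : Fin n × Fin n → ℝ, IsCirculation n (ctt n E E') h ∧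
        ∀ a ∈ ctt n E E', 0 < h a) := by
  classical
  have hn : 0 < n := Fin.pos_iff_nonempty.mpr hT.2.isConnected.nonempty
  refine ⟨fun h hc => part1_lemma E E' h hc, ?_, ?_⟩
  · -- forward direction
    intro hdim
    have hle : Submodule.span ℝ (rootCone n E ∩ rootCone n E') ≤ LinearMap.ker (sumCoord n) :=
      Submodule.span_le.mpr (fun x hx => rootCone_subset_ker E x hx.1)
    have heq : Submodule.span ℝ (rootCone n E ∩ rootCone n E') = LinearMap.ker (sumCoord n) :=
      Submodule.eq_of_le_of_finrank_eq hle (by rw [hdim, finrank_ker_sumCoord hn])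
    choose Ff Fg hFf hFg hFeq hFpos using exists_pos_coord hT heq
    choose Gf Gg hGf hGg hGeq hGpos using exists_pos_coord' hT' heq
    have hEF : E ⊆ ctt n E E' := Finset.subset_union_left
    -- the combined representations
    have hz : ∑ p ∈ E, ((∑ a ∈ E, Ff a p) + (∑ b ∈ E', Gf b p)) • rootVec n p
        = ∑ p ∈ E', ((∑ a ∈ E, Fg a p) + (∑ b ∈ E', Gg b p)) • rootVec n p := by
      have l1 : ∀ (W : Finset (Fin n × Fin n))
          (u v : (Fin n × Fin n) → (Fin n × Fin n) → ℝ),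
          ∑ p ∈ W, ((∑ a ∈ E, u a p) + (∑ b ∈ E', v b p)) • rootVec n p
            = (∑ a ∈ E, ∑ p ∈ W, u a p • rootVec n p)
              + ∑ b ∈ E', ∑ p ∈ W, v b p • rootVec n p := by
        intro W u v
        calc ∑ p ∈ W, ((∑ a ∈ E, u a p) + (∑ b ∈ E', v b p)) • rootVec n p
            = ∑ p ∈ W, ((∑ a ∈ E, u a p • rootVec n p) + ∑ b ∈ E', v b p • rootVec n p) := by
              refine Finset.sum_congr rfl fun p _ => ?_
              rw [add_smul, Finset.sum_smul, Finset.sum_smul]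
          _ = (∑ p ∈ W, ∑ a ∈ E, u a p • rootVec n p)
              + ∑ p ∈ W, ∑ b ∈ E', v b p • rootVec n p := Finset.sum_add_distrib
          _ = _ := by rw [Finset.sum_comm (s := W) (t := E),
                Finset.sum_comm (s := W) (t := E')]
      rw [l1 E Ff Gf, l1 E' Fg Gg]
      congr 1
      · exact Finset.sum_congr rfl fun a _ => hFeq a
      · exact Finset.sum_congr rfl fun b _ => hGeq b
    refine ⟨fun p => (if p ∈ E then (∑ a ∈ E, Ff a p) + (∑ b ∈ E', Gf b p) else 0)
        + (if Prod.swap p ∈ E' then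
            (∑ a ∈ E, Fg a (Prod.swap p)) + (∑ b ∈ E', Gg b (Prod.swap p)) else 0),
      ⟨?_, ?_⟩, ?_⟩
    · -- nonnegativity
      intro p _
      have n1 : (0:ℝ) ≤ (∑ a ∈ E, Ff a p) + (∑ b ∈ E', Gf b p) :=
        add_nonneg (Finset.sum_nonneg fun a _ => hFf a p)
          (Finset.sum_nonneg fun b _ => hGf b p)
      have n2 : (0:ℝ) ≤ (∑ a ∈ E, Fg a (Prod.swap p)) + (∑ b ∈ E', Gg b (Prod.swap p)) :=
        add_nonneg (Finset.sum_nonneg fun a _ => hFg a _)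
          (Finset.sum_nonneg fun b _ => hGg b _)
      beta_reduce
      split_ifs <;> linarith
    · -- conservation
      apply (conserve_iff (ctt n E E') _).mpr
      have split : ∑ p ∈ ctt n E E',
          ((if p ∈ E then (∑ a ∈ E, Ff a p) + (∑ b ∈ E', Gf b p) else 0)
            + (if Prod.swap p ∈ E' then
              (∑ a ∈ E, Fg a (Prod.swap p)) + (∑ b ∈ E', Gg b (Prod.swap p)) else 0)) • rootVec n p
          = (∑ p ∈ ctt n E E',
              (if p ∈ E then (∑ a ∈ E, Ff a p) + (∑ b ∈ E', Gf b p) else 0) • rootVec n p)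
            + ∑ p ∈ ctt n E E',
              (if Prod.swap p ∈ E' then
                (∑ a ∈ E, Fg a (Prod.swap p)) + (∑ b ∈ E', Gg b (Prod.swap p)) else 0) • rootVec n p := by
        rw [← Finset.sum_add_distrib]
        exact Finset.sum_congr rfl fun p _ => add_smul _ _ _
      have S1 : ∑ p ∈ ctt n E E',
          (if p ∈ E then (∑ a ∈ E, Ff a p) + (∑ b ∈ E', Gf b p) else 0) • rootVec n p
          = ∑ p ∈ E, ((∑ a ∈ E, Ff a p) + (∑ b ∈ E', Gf b p)) • rootVec n p := by
        simp only [ite_smul, zero_smul]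
        rw [← Finset.sum_filter, Finset.filter_mem_eq_inter, Finset.inter_eq_right.mpr hEF]
      have S2 : ∑ p ∈ ctt n E E',
          (if Prod.swap p ∈ E' then
            (∑ a ∈ E, Fg a (Prod.swap p)) + (∑ b ∈ E', Gg b (Prod.swap p)) else 0) • rootVec n p
          = - ∑ p ∈ E', ((∑ a ∈ E, Fg a p) + (∑ b ∈ E', Gg b p)) • rootVec n p := by
        simp only [ite_smul, zero_smul]
        rw [← Finset.sum_filter, filter_swap_mem,
          sum_image_swap E' (fun p => (∑ a ∈ E, Fg a (Prod.swap p)) + (∑ b ∈ E', Gg b (Prod.swap p)))]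
        congr 1
      rw [split, S1, S2, hz]
      exact add_neg_cancel _
    · -- strict positivity
      intro p hp
      beta_reduce
      have n1 : (0:ℝ) ≤ ∑ b ∈ E', Gf b p := Finset.sum_nonneg fun b _ => hGf b p
      have n2 : (0:ℝ) ≤ ∑ a ∈ E, Fg a (Prod.swap p) := Finset.sum_nonneg fun a _ => hFg a _
      have n3 : (0:ℝ) ≤ ∑ b ∈ E', Gg b (Prod.swap p) := Finset.sum_nonneg fun b _ => hGg b _
      have n4 : (0:ℝ) ≤ ∑ a ∈ E, Ff a p := Finset.sum_nonneg fun a _ => hFf a p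
      rcases mem_ctt.mp hp with hpE | hpE'
      · have hA : 0 < ∑ a ∈ E, Ff a p :=
          Finset.sum_pos' (fun i _ => hFf i p) ⟨p, hpE, hFpos p hpE⟩
        rw [if_pos hpE]
        split_ifs <;> linarith
      · have hB : 0 < ∑ b ∈ E', Gg b (Prod.swap p) :=
          Finset.sum_pos' (fun i _ => hGg i _) ⟨Prod.swap p, hpE', hGpos _ hpE'⟩
        rw [if_pos hpE']
        split_ifs <;> linarith
  · -- backward direction
    intro hex
    rw [span_inter_eq hT hT' hex]
    exact finrank_ker_sumCoord hn
end Helpers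
end

section
/- Suppose T and T' are alternating trees on [n] that are sign compatible, and let C = C(T,T'). Then for every nonempty proper subset I ⊊ [n], the set of arcs of C entering I and the set of arcs of C leaving I are both nonempty: ind(C_I) ≠ ∅ and outd(C_I) ≠ ∅. (Lemma 3.6.) -/
open Finset

/-- The possible tree sign vector entries: `+`, `-`, or `?`. -/
inductive TreeSign : Type
  | pos | neg | unk
  deriving DecidableEq

/-- The tree sign vector entry `σ_I(T)` for the directed graph with arc set `E`:
`+` if no arc enters `I`, `-` if no arc leaves `I`, and `?` otherwise. -/
def treeSign (n : ℕ) (E : Finset (Fin n × Fin n)) (I : Finset (Fin n)) :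
    TreeSign :=
  if ∀ a ∈ E, a.2 ∈ I → a.1 ∈ I then TreeSign.pos
  else if ∀ a ∈ E, a.1 ∈ I → a.2 ∈ I then TreeSign.neg
  else TreeSign.unk

/-- Two alternating trees on `[n]` (given by arc sets `E`, `E'`) are sign compatible
if there is no nonempty `I ⊆ [n-1]` on which their tree sign vectors take the two
opposite definite values `+` and `-`. -/
def SignCompatible (n : ℕ) (E E' : Finset (Fin n × Fin n)) : Prop :=
  ¬ ∃ I : Finset (Fin n), I.Nonempty ∧ (∀ i ∈ I, (i : ℕ) + 1 < n) ∧
    ((treeSign n E I = TreeSign.pos ∧ treeSign n E' I = TreeSign.neg) ∨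
     (treeSign n E I = TreeSign.neg ∧ treeSign n E' I = TreeSign.pos))

lemma walk_cross {V : Type*} {G : SimpleGraph V} (I : Finset V) [DecidableEq V] :
    ∀ {i j : V}, G.Walk i j → i ∈ I → j ∉ I →
      ∃ u v, G.Adj u v ∧ u ∈ I ∧ v ∉ I := by
  intro i j p
  induction p with
  | nil => intro hi hj; exact absurd hi hj
  | @cons u v w h q ih =>
    intro hi hj
    by_cases hv : v ∈ I
    · exact ih hv hj
    · exact ⟨u, v, h, hi, hv⟩

lemma exists_cross (n : ℕ) (E : Finset (Fin n × Fin n))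
    (hconn : (underlying n E).Connected) (I : Finset (Fin n))
    (hne : I.Nonempty) (hproper : I ≠ Finset.univ) :
    ∃ a ∈ E, (a.1 ∈ I ∧ a.2 ∉ I) ∨ (a.1 ∉ I ∧ a.2 ∈ I) := by
  obtain ⟨i, hi⟩ := hne
  have : ∃ j, j ∉ I := by
    by_contra hc
    push_neg at hc
    exact hproper (Finset.eq_univ_iff_forall.mpr hc)
  obtain ⟨j, hj⟩ := this
  obtain ⟨p⟩ := hconn.preconnected i j
  obtain ⟨u, v, huv, hu, hv⟩ := walk_cross I p hi hj
  rcases huv.2 with h | h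
  · exact ⟨(u, v), h, Or.inl ⟨hu, hv⟩⟩
  · exact ⟨(v, u), h, Or.inr ⟨hv, hu⟩⟩

/-- The key sign-compatibility contradiction: it cannot happen that `E` has no arc
entering `I` while `E'` has no arc leaving `I`. -/
lemma key (n : ℕ) (E E' : Finset (Fin n × Fin n))
    (hT : IsAltTree n E) (hT' : IsAltTree n E') (hcompat : SignCompatible n E E')
    (I : Finset (Fin n)) (hne : I.Nonempty) (hproper : I ≠ Finset.univ)
    (h1 : ∀ a ∈ E, a.2 ∈ I → a.1 ∈ I) (h2 : ∀ a ∈ E', a.1 ∈ I → a.2 ∈ I) :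
    False := by
  have hn : 0 < n := hne.choose.pos
  set l : Fin n := ⟨n - 1, Nat.sub_lt hn one_pos⟩ with hl
  have hlast : ∀ i : Fin n, (i : ℕ) + 1 ≠ n → (i : ℕ) + 1 < n := by
    intro i hi
    exact lt_of_le_of_ne i.isLt hi
  by_cases hlI : l ∈ I
  · -- use J = Iᶜ
    set J : Finset (Fin n) := Iᶜ with hJ
    have hJne : J.Nonempty := by
      have : ∃ j, j ∉ I := by
        by_contra hc
        push_neg at hc
        exact hproper (Finset.eq_univ_iff_forall.mpr hc)
      obtain ⟨j, hj⟩ := this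
      exact ⟨j, Finset.mem_compl.mpr hj⟩
    have hJproper : J ≠ Finset.univ := by
      intro hc
      have := Finset.eq_univ_iff_forall.mp hc l
      exact (Finset.mem_compl.mp this) hlI
    have hJsub : ∀ i ∈ J, (i : ℕ) + 1 < n := by
      intro i hiJ
      refine hlast i fun hc => ?_
      have : i = l := by
        apply Fin.ext
        simp [hl, ← hc]
      exact (Finset.mem_compl.mp hiJ) (this ▸ hlI)
    -- σ_J(E') = pos
    have hpos' : ∀ a ∈ E', a.2 ∈ J → a.1 ∈ J := by
      intro a ha h2a
      rw [Finset.mem_compl] at h2a ⊢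
      intro h1a
      exact h2a (h2 a ha h1a)
    -- σ_J(E) = neg
    have hnegJ : ∀ a ∈ E, a.1 ∈ J → a.2 ∈ J := by
      intro a ha h1a
      rw [Finset.mem_compl] at h1a ⊢
      intro h2a
      exact h1a (h1 a ha h2a)
    have hnotpos : ¬ ∀ a ∈ E, a.2 ∈ J → a.1 ∈ J := by
      intro hp
      obtain ⟨a, ha, hcr⟩ := exists_cross n E hT.2.isConnected I hne hproper
      rcases hcr with ⟨hu, hv⟩ | ⟨hu, hv⟩
      · -- a leaves I, i.e. a.2 ∈ J, a.1 ∉ J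
        exact (Finset.mem_compl.mp (hp a ha (Finset.mem_compl.mpr hv))) hu
      · exact hu (h1 a ha hv)
    apply hcompat
    refine ⟨J, hJne, hJsub, Or.inr ⟨?_, ?_⟩⟩
    · rw [treeSign, if_neg hnotpos, if_pos hnegJ]
    · rw [treeSign, if_pos hpos']
  · have hIsub : ∀ i ∈ I, (i : ℕ) + 1 < n := by
      intro i hiI
      refine hlast i fun hc => ?_
      have : i = l := by
        apply Fin.ext
        simp [hl, ← hc]
      exact hlI (this ▸ hiI)
    have hnotpos' : ¬ ∀ a ∈ E', a.2 ∈ I → a.1 ∈ I := by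
      intro hp
      obtain ⟨a, ha, hcr⟩ := exists_cross n E' hT'.2.isConnected I hne hproper
      rcases hcr with ⟨hu, hv⟩ | ⟨hu, hv⟩
      · exact hv (h2 a ha hu)
      · exact hu (hp a ha hv)
    apply hcompat
    refine ⟨I, hne, hIsub, Or.inl ⟨?_, ?_⟩⟩
    · rw [treeSign, if_pos h1]
    · rw [treeSign, if_neg hnotpos', if_pos h2]

/-- Lemma 3.6. If `T, T'` are sign compatible alternating trees on
`[n]` and `C = C(T,T')`, then for every nonempty proper subset `I ⊊ [n]` the arcs of
`C` entering `I` and the arcs of `C` leaving `I` are both nonempty. -/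
theorem ctt_in_out_nonempty (n : ℕ) (E E' : Finset (Fin n × Fin n))
    (hT : IsAltTree n E) (hT' : IsAltTree n E') (hcompat : SignCompatible n E E')
    (I : Finset (Fin n)) (hne : I.Nonempty) (hproper : I ≠ Finset.univ) :
    (∃ a ∈ ctt n E E', a.1 ∉ I ∧ a.2 ∈ I) ∧
    (∃ a ∈ ctt n E E', a.1 ∈ I ∧ a.2 ∉ I) := by
  have hcompat' : SignCompatible n E' E := by
    intro ⟨J, hJne, hJsub, h⟩
    rcases h with ⟨ha, hb⟩ | ⟨ha, hb⟩
    · exact hcompat ⟨J, hJne, hJsub, Or.inr ⟨hb, ha⟩⟩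
    · exact hcompat ⟨J, hJne, hJsub, Or.inl ⟨hb, ha⟩⟩
  constructor
  · by_contra hc
    push_neg at hc
    refine key n E E' hT hT' hcompat I hne hproper ?_ ?_
    · intro a ha h2a
      by_contra h1a
      exact (hc a (Finset.mem_union_left _ ha) h1a) h2a
    · intro a ha h1a
      by_contra h2a
      have hm : a.swap ∈ ctt n E E' :=
        Finset.mem_union_right _ (Finset.mem_image_of_mem _ ha)
      exact (hc a.swap hm h2a) h1a
  · by_contra hc
    push_neg at hc
    refine key n E' E hT' hT hcompat' I hne hproper ?_ ?_
    · intro a ha h2a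
      have hm : a.swap ∈ ctt n E E' :=
        Finset.mem_union_right _ (Finset.mem_image_of_mem _ ha)
      exact hc a.swap hm h2a
    · intro a ha h1a
      exact hc a (Finset.mem_union_left _ ha) h1a
end

section
/- Let T and T' be two alternating trees on [n]. Then the intersection of their root cones 𝒞(T) and 𝒞(T') is full-dimensional, i.e., dim(𝒞(T) ∩ 𝒞(T')) = n − 1, if and only if T and T' are sign compatible. (Corollary 3.7.) -/
open Finset

/-! ### Auxiliary material -/

namespace AltAux

noncomputable section

variable (n : ℕ)

/-- The linear functional summing coordinates over `S`. -/
def sumOver (S : Finset (Fin n)) : (Fin n → ℝ) →ₗ[ℝ] ℝ where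
  toFun x := ∑ i ∈ S, x i
  map_add' x y := by simp [Finset.sum_add_distrib]
  map_smul' c x := by simp [Finset.mul_sum]

lemma sumOver_apply (S : Finset (Fin n)) (x : Fin n → ℝ) :
    sumOver n S x = ∑ i ∈ S, x i := rfl

lemma sum_rootVec (a : Fin n × Fin n) : ∑ k, rootVec n a k = 0 := by
  simp [rootVec, Finset.sum_sub_distrib]

lemma sumOver_rootVec (S : Finset (Fin n)) (a : Fin n × Fin n) :
    sumOver n S (rootVec n a) =
      (if a.1 ∈ S then (1:ℝ) else 0) - (if a.2 ∈ S then (1:ℝ) else 0) := by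
  simp [sumOver_apply, rootVec, Finset.sum_sub_distrib, Finset.sum_ite_eq]

/-- The linear map sending a coefficient vector to the corresponding
combination of roots over `E`. -/
def coneMap (E : Finset (Fin n × Fin n)) :
    ((Fin n × Fin n) → ℝ) →ₗ[ℝ] (Fin n → ℝ) where
  toFun g := ∑ a ∈ E, g a • rootVec n a
  map_add' g h := by simp [add_smul, Finset.sum_add_distrib]
  map_smul' c g := by simp [Finset.smul_sum, smul_smul]

lemma coneMap_apply (E : Finset (Fin n × Fin n)) (g : (Fin n × Fin n) → ℝ) :
    coneMap n E g = ∑ a ∈ E, g a • rootVec n a := rfl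

lemma sumOver_coneMap (E : Finset (Fin n × Fin n)) (g : (Fin n × Fin n) → ℝ) :
    sumOver n Finset.univ (coneMap n E g) = 0 := by
  rw [coneMap_apply, map_sum]
  refine Finset.sum_eq_zero fun a _ => ?_
  rw [map_smul, sumOver_apply]
  simp [sum_rootVec]

lemma sumOver_mul_rootVec (S : Finset (Fin n)) (g : ℝ) (a : Fin n × Fin n) :
    sumOver n S (g • rootVec n a) =
      g * ((if a.1 ∈ S then (1:ℝ) else 0) - (if a.2 ∈ S then (1:ℝ) else 0)) := by
  rw [map_smul, sumOver_rootVec]; rfl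

variable {n}

lemma coneMap_single {E : Finset (Fin n × Fin n)} {a : Fin n × Fin n} (ha : a ∈ E) (c : ℝ) :
    coneMap n E (fun b => if b = a then c else 0) = c • rootVec n a := by
  classical
  rw [coneMap_apply]
  rw [Finset.sum_eq_single a]
  · simp
  · intro b _ hb; simp [hb]
  · intro h; exact absurd ha h

lemma rootVec_mem_range {E : Finset (Fin n × Fin n)} {i j : Fin n}
    (h : (underlying n E).Reachable i j) :
    rootVec n (i, j) ∈ LinearMap.range (coneMap n E) := by
  classical
  obtain ⟨w⟩ := h
  induction w with
  | nil =>
    refine ⟨0, ?_⟩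
    rw [map_zero]; funext k; simp [rootVec]
  | @cons u v w h p ih =>
    have hstep : rootVec n (u, v) ∈ LinearMap.range (coneMap n E) := by
      rcases (h : u ≠ v ∧ ((u, v) ∈ E ∨ (v, u) ∈ E)).2 with huv | hvu
      · exact ⟨_, by rw [coneMap_single huv 1, one_smul]⟩
      · refine ⟨fun b => if b = (v, u) then (-1 : ℝ) else 0, ?_⟩
        rw [coneMap_single hvu (-1)]
        funext k
        simp only [rootVec, Pi.smul_apply, smul_eq_mul]
        ring
    have hadd : rootVec n (u, w) = rootVec n (u, v) + rootVec n (v, w) := by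
      funext k; simp only [rootVec, Pi.add_apply]; ring
    rw [hadd]
    exact Submodule.add_mem _ hstep ih

lemma exists_crossing {G : SimpleGraph (Fin n)} (S : Finset (Fin n)) :
    ∀ {i j : Fin n}, G.Walk i j → i ∉ S → j ∈ S →
      ∃ u v, G.Adj u v ∧ u ∉ S ∧ v ∈ S := by
  classical
  intro i j w
  induction w with
  | nil => exact fun hi hj => absurd hj hi
  | @cons u v w h p ih =>
    intro hi hj
    by_cases hv : v ∈ S
    · exact ⟨u, v, h, hi, hv⟩
    · exact ih hv hj

lemma mem_range_coneMap {E : Finset (Fin n × Fin n)}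
    (hconn : (underlying n E).Preconnected) (z : Fin n) (v : Fin n → ℝ)
    (hv : ∑ k, v k = 0) : v ∈ LinearMap.range (coneMap n E) := by
  classical
  have hrep : v = ∑ k : Fin n, v k • rootVec n (k, z) := by
    funext m
    simp only [Finset.sum_apply, Pi.smul_apply, smul_eq_mul, rootVec]
    have hterm : ∀ k : Fin n,
        v k * ((if m = k then (1:ℝ) else 0) - (if m = z then 1 else 0)) =
          (if m = k then v k else 0) - v k * (if m = z then 1 else 0) := by
      intro k; split_ifs <;> ring
    rw [Finset.sum_congr rfl (fun k _ => hterm k), Finset.sum_sub_distrib,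
      Finset.sum_ite_eq, ← Finset.sum_mul, hv, zero_mul, sub_zero,
      if_pos (Finset.mem_univ m)]
  rw [hrep]
  exact Submodule.sum_mem _ fun k _ =>
    Submodule.smul_mem _ _ (rootVec_mem_range (hconn k z))

variable (n)

/-- The map `(g, t) ↦ Σ_{a ∈ E} g(a) · rootVec(a) + t · 𝟙`. -/
def fullMap (E : Finset (Fin n × Fin n)) :
    (((Fin n × Fin n) → ℝ) × ℝ) →ₗ[ℝ] (Fin n → ℝ) :=
  (coneMap n E).comp (LinearMap.fst ℝ _ _) +
    (LinearMap.toSpanSingleton ℝ (Fin n → ℝ) (fun _ => 1)).comp (LinearMap.snd ℝ _ _)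

lemma fullMap_apply (E : Finset (Fin n × Fin n)) (g : (Fin n × Fin n) → ℝ) (t : ℝ) :
    fullMap n E (g, t) = coneMap n E g + t • (fun _ => (1:ℝ)) := rfl

variable {n}

lemma fullMap_surjective {E : Finset (Fin n × Fin n)}
    (hconn : (underlying n E).Preconnected) (hn : 0 < n) :
    Function.Surjective (fullMap n E) := by
  intro v
  have hn' : (n:ℝ) ≠ 0 := Nat.cast_ne_zero.mpr hn.ne'
  set s : ℝ := (∑ k, v k) / n with hs
  have h0 : ∑ k, (v k - s) = 0 := by
    rw [Finset.sum_sub_distrib, Finset.sum_const, Finset.card_univ, Fintype.card_fin,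
      nsmul_eq_mul, hs]
    field_simp
    ring
  obtain ⟨g, hg⟩ := mem_range_coneMap hconn ⟨0, hn⟩ (fun k => v k - s) h0
  refine ⟨(g, s), ?_⟩
  rw [fullMap_apply, hg]
  funext m
  simp

lemma sumOver_fullMap {E : Finset (Fin n × Fin n)} (g : (Fin n × Fin n) → ℝ) (t : ℝ) :
    sumOver n Finset.univ (fullMap n E (g, t)) = t * n := by
  rw [fullMap_apply, map_add, sumOver_coneMap, zero_add, map_smul]
  rw [sumOver_apply]
  simp [mul_comm]

lemma coneMap_mem_rootCone {E : Finset (Fin n × Fin n)} (g : (Fin n × Fin n) → ℝ)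
    (hg : ∀ a ∈ E, 0 ≤ g a) : coneMap n E g ∈ rootCone n E := by
  classical
  refine ⟨fun a => if a ∈ E then g a else 0, ?_, ?_⟩
  · intro a
    by_cases h : a ∈ E
    · simpa [h] using hg a h
    · simp [h]
  · rw [coneMap_apply]
    exact (Finset.sum_congr rfl fun a ha => by simp [ha]).symm

lemma sumOver_nonneg_of_cone {E : Finset (Fin n × Fin n)} {I : Finset (Fin n)}
    (hI : ∀ a ∈ E, a.2 ∈ I → a.1 ∈ I) {x : Fin n → ℝ} (hx : x ∈ rootCone n E) :
    0 ≤ sumOver n I x := by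
  obtain ⟨f, hf, rfl⟩ := hx
  rw [map_sum]
  refine Finset.sum_nonneg fun a ha => ?_
  rw [sumOver_mul_rootVec]
  apply mul_nonneg (hf a)
  by_cases h2 : a.2 ∈ I
  · rw [if_pos (hI a ha h2), if_pos h2]; norm_num
  · rw [if_neg h2]; split_ifs <;> norm_num

lemma sumOver_nonpos_of_cone {E : Finset (Fin n × Fin n)} {I : Finset (Fin n)}
    (hI : ∀ a ∈ E, a.1 ∈ I → a.2 ∈ I) {x : Fin n → ℝ} (hx : x ∈ rootCone n E) :
    sumOver n I x ≤ 0 := by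
  obtain ⟨f, hf, rfl⟩ := hx
  rw [map_sum]
  refine Finset.sum_nonpos fun a ha => ?_
  rw [sumOver_mul_rootVec]
  apply mul_nonpos_iff.mpr
  refine Or.inl ⟨hf a, ?_⟩
  by_cases h1 : a.1 ∈ I
  · rw [if_pos h1, if_pos (hI a ha h1)]; norm_num
  · rw [if_neg h1]; split_ifs <;> norm_num

end

end AltAux

lemma treeSign_pos_iff {n : ℕ} {E : Finset (Fin n × Fin n)} {I : Finset (Fin n)} :
    treeSign n E I = TreeSign.pos ↔ ∀ a ∈ E, a.2 ∈ I → a.1 ∈ I := by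
  unfold treeSign
  split_ifs with h1 h2
  · exact ⟨fun _ => h1, fun _ => rfl⟩
  · exact ⟨fun h => False.elim h, fun h => absurd h h1⟩
  · exact ⟨fun h => False.elim h, fun h => absurd h h1⟩

lemma treeSign_neg_iff {n : ℕ} {E : Finset (Fin n × Fin n)} {I : Finset (Fin n)} :
    treeSign n E I = TreeSign.neg ↔
      (¬ ∀ a ∈ E, a.2 ∈ I → a.1 ∈ I) ∧ ∀ a ∈ E, a.1 ∈ I → a.2 ∈ I := by
  unfold treeSign
  split_ifs with h1 h2
  · exact ⟨fun h => False.elim h, fun h => absurd h1 h.1⟩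
  · exact ⟨fun _ => ⟨h1, h2⟩, fun _ => rfl⟩
  · exact ⟨fun h => False.elim h, fun h => absurd h.2 h2⟩

/-- From a potential which is monotone along the arcs of `E` and antitone along the
arcs of `E'`, and strictly increases along some arc of `E`, we can extract a sign
incompatibility witness. -/
lemma exists_bad_I (n : ℕ) (E E' : Finset (Fin n × Fin n)) (hn : 0 < n)
    (hcE : (underlying n E).Preconnected) (hcE' : (underlying n E').Preconnected)
    (y : Fin n → ℝ) (hE : ∀ a ∈ E, y a.1 ≤ y a.2) (hE' : ∀ a ∈ E', y a.2 ≤ y a.1)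
    (hst : ∃ a ∈ E, y a.1 < y a.2) :
    ∃ I : Finset (Fin n), I.Nonempty ∧ (∀ i ∈ I, (i : ℕ) + 1 < n) ∧
      ((treeSign n E I = TreeSign.pos ∧ treeSign n E' I = TreeSign.neg) ∨
       (treeSign n E I = TreeSign.neg ∧ treeSign n E' I = TreeSign.pos)) := by
  classical
  set z : Fin n := ⟨n - 1, by omega⟩ with hzdef
  have hIsubaux : ∀ (I : Finset (Fin n)), z ∉ I → ∀ i ∈ I, (i : ℕ) + 1 < n := by
    intro I hzI i hi
    have h1 : (i : ℕ) < n := i.isLt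
    have h2 : (i : ℕ) ≠ n - 1 := by
      intro hc
      exact hzI (by rwa [show i = z from Fin.ext (by simp [hzdef, hc])] at hi)
    omega
  by_cases hmax : ∃ k, y z < y k
  · obtain ⟨k₀, hk₀⟩ := hmax
    set I : Finset (Fin n) := Finset.univ.filter (fun k => y z < y k) with hI
    have hzI : z ∉ I := by simp [hI]
    have hk₀I : k₀ ∈ I := by simp [hI, hk₀]
    have hP2 : ∀ a ∈ E, a.1 ∈ I → a.2 ∈ I := by
      intro a ha h1
      simp only [hI, Finset.mem_filter, Finset.mem_univ, true_and] at h1 ⊢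
      exact lt_of_lt_of_le h1 (hE a ha)
    have hP1' : ∀ a ∈ E', a.2 ∈ I → a.1 ∈ I := by
      intro a ha h2
      simp only [hI, Finset.mem_filter, Finset.mem_univ, true_and] at h2 ⊢
      exact lt_of_lt_of_le h2 (hE' a ha)
    have hcross : ∃ a ∈ E, a.2 ∈ I ∧ a.1 ∉ I := by
      obtain ⟨w⟩ := hcE z k₀
      obtain ⟨p, q, hpq, hpS, hqS⟩ := AltAux.exists_crossing I w hzI hk₀I
      rcases (hpq : p ≠ q ∧ ((p, q) ∈ E ∨ (q, p) ∈ E)).2 with h | h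
      · exact ⟨(p, q), h, hqS, hpS⟩
      · exact absurd (hP2 (q, p) h hqS) hpS
    have hneg : treeSign n E I = TreeSign.neg := by
      rw [treeSign_neg_iff]
      refine ⟨fun hall => ?_, hP2⟩
      obtain ⟨a, ha, h2, h1⟩ := hcross
      exact h1 (hall a ha h2)
    exact ⟨I, ⟨k₀, hk₀I⟩, hIsubaux I hzI,
      Or.inr ⟨hneg, treeSign_pos_iff.mpr hP1'⟩⟩
  · push_neg at hmax
    obtain ⟨a₀, ha₀, hlt⟩ := hst
    set I : Finset (Fin n) := Finset.univ.filter (fun k => y k < y z) with hI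
    have hzI : z ∉ I := by simp [hI]
    have ha₀I : a₀.1 ∈ I := by
      simp only [hI, Finset.mem_filter, Finset.mem_univ, true_and]
      exact lt_of_lt_of_le hlt (hmax a₀.2)
    have hP1 : ∀ a ∈ E, a.2 ∈ I → a.1 ∈ I := by
      intro a ha h2
      simp only [hI, Finset.mem_filter, Finset.mem_univ, true_and] at h2 ⊢
      exact lt_of_le_of_lt (hE a ha) h2
    have hP2' : ∀ a ∈ E', a.1 ∈ I → a.2 ∈ I := by
      intro a ha h1
      simp only [hI, Finset.mem_filter, Finset.mem_univ, true_and] at h1 ⊢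
      exact lt_of_le_of_lt (hE' a ha) h1
    have hcross' : ∃ a ∈ E', a.2 ∈ I ∧ a.1 ∉ I := by
      obtain ⟨w⟩ := hcE' z a₀.1
      obtain ⟨p, q, hpq, hpS, hqS⟩ := AltAux.exists_crossing I w hzI ha₀I
      rcases (hpq : p ≠ q ∧ ((p, q) ∈ E' ∨ (q, p) ∈ E')).2 with h | h
      · exact ⟨(p, q), h, hqS, hpS⟩
      · exact absurd (hP2' (q, p) h hqS) hpS
    have hneg' : treeSign n E' I = TreeSign.neg := by
      rw [treeSign_neg_iff]
      refine ⟨fun hall => ?_, hP2'⟩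
      obtain ⟨a, ha, h2, h1⟩ := hcross'
      exact h1 (hall a ha h2)
    exact ⟨I, ⟨a₀.1, ha₀I⟩, hIsubaux I hzI,
      Or.inl ⟨treeSign_pos_iff.mpr hP1, hneg'⟩⟩

lemma exists_eps (n : ℕ) (E E' : Finset (Fin n × Fin n)) (g g' h h' : (Fin n × Fin n) → ℝ)
    (hg : ∀ a, 0 < g a) (hg' : ∀ a, 0 < g' a) :
    ∃ ε : ℝ, 0 < ε ∧ (∀ a ∈ E, 0 ≤ g a + ε * h a) ∧ (∀ a ∈ E', 0 ≤ g' a + ε * h' a) := by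
  classical
  set s : Finset ℝ :=
    insert 1 ((E.image fun a => g a / (|h a| + 1)) ∪ (E'.image fun a => g' a / (|h' a| + 1)))
    with hs
  have hne : s.Nonempty := ⟨1, Finset.mem_insert_self _ _⟩
  set ε := s.min' hne with he
  have hqpos : ∀ r ∈ s, 0 < r := by
    intro r hr
    rw [hs] at hr
    rcases Finset.mem_insert.mp hr with rfl | hr
    · exact one_pos
    rcases Finset.mem_union.mp hr with hr | hr
    · obtain ⟨a, _, rfl⟩ := Finset.mem_image.mp hr
      exact div_pos (hg a) (by positivity)
    · obtain ⟨a, _, rfl⟩ := Finset.mem_image.mp hr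
      exact div_pos (hg' a) (by positivity)
  have hεpos : 0 < ε := hqpos _ (Finset.min'_mem s hne)
  refine ⟨ε, hεpos, ?_, ?_⟩
  · intro a ha
    have hle : ε ≤ g a / (|h a| + 1) := by
      apply Finset.min'_le
      rw [hs]
      exact Finset.mem_insert_of_mem
        (Finset.mem_union_left _ (Finset.mem_image_of_mem _ ha))
    have habs : (0:ℝ) < |h a| + 1 := by positivity
    rw [le_div_iff₀ habs] at hle
    nlinarith [mul_le_mul_of_nonneg_left (neg_abs_le (h a)) hεpos.le]
  · intro a ha
    have hle : ε ≤ g' a / (|h' a| + 1) := by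
      apply Finset.min'_le
      rw [hs]
      exact Finset.mem_insert_of_mem
        (Finset.mem_union_right _ (Finset.mem_image_of_mem _ ha))
    have habs : (0:ℝ) < |h' a| + 1 := by positivity
    rw [le_div_iff₀ habs] at hle
    nlinarith [mul_le_mul_of_nonneg_left (neg_abs_le (h' a)) hεpos.le]

/-- Corollary 3.7. Two alternating trees `T, T'` on `[n]` have
full-dimensional intersection of root cones, `dim(𝒞(T) ∩ 𝒞(T')) = n - 1`, if and
only if they are sign compatible. -/
theorem full_dim_iff_signCompatible (n : ℕ) (E E' : Finset (Fin n × Fin n))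
    (hT : IsAltTree n E) (hT' : IsAltTree n E') :
    Module.finrank ℝ (Submodule.span ℝ (rootCone n E ∩ rootCone n E')) = n - 1 ↔
      SignCompatible n E E' := by
  classical
  have hconn : (underlying n E).Connected := hT.2.isConnected
  have hconn' : (underlying n E').Connected := hT'.2.isConnected
  have hn : 0 < n := Fin.pos_iff_nonempty.mpr hconn.nonempty
  set z : Fin n := ⟨n - 1, by omega⟩ with hzdef
  -- the hyperplane of coordinate-sum zero
  have hVzrank :
      Module.finrank ℝ (LinearMap.ker (AltAux.sumOver n Finset.univ)) = n - 1 := by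
    have hsurj : LinearMap.range (AltAux.sumOver n Finset.univ) = ⊤ := by
      rw [LinearMap.range_eq_top]
      intro c
      refine ⟨fun k => if k = z then c else 0, ?_⟩
      rw [AltAux.sumOver_apply]
      simp [Finset.sum_ite_eq']
    have h1 := LinearMap.finrank_range_add_finrank_ker (AltAux.sumOver n Finset.univ)
    rw [hsurj, finrank_top, Module.finrank_self,
      Module.finrank_fintype_fun_eq_card, Fintype.card_fin] at h1
    omega
  have hsubV : ∀ (F : Finset (Fin n × Fin n)) (x : Fin n → ℝ),
      x ∈ rootCone n F → AltAux.sumOver n Finset.univ x = 0 := by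
    intro F x hx
    obtain ⟨f, hf, rfl⟩ := hx
    rw [map_sum]
    refine Finset.sum_eq_zero fun a _ => ?_
    rw [AltAux.sumOver_mul_rootVec]
    simp
  have hle : Submodule.span ℝ (rootCone n E ∩ rootCone n E') ≤
      LinearMap.ker (AltAux.sumOver n Finset.univ) := by
    rw [Submodule.span_le]
    rintro x ⟨hx1, _⟩
    simpa [LinearMap.mem_ker] using hsubV E x hx1
  constructor
  · -- full dimension implies sign compatibility
    intro hrank
    by_contra hsc
    rw [SignCompatible, not_not] at hsc
    obtain ⟨I, ⟨i₀, hi₀⟩, hIsub, hcase⟩ := hsc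
    have hzI : z ∉ I := by
      intro hzi
      have := hIsub z hzi
      simp [hzdef] at this
      omega
    have hker : Submodule.span ℝ (rootCone n E ∩ rootCone n E') ≤
        LinearMap.ker (AltAux.sumOver n I) := by
      rw [Submodule.span_le]
      rintro x ⟨hx1, hx2⟩
      rw [SetLike.mem_coe, LinearMap.mem_ker]
      rcases hcase with ⟨hp, hq⟩ | ⟨hp, hq⟩
      · exact le_antisymm
          (AltAux.sumOver_nonpos_of_cone (treeSign_neg_iff.mp hq).2 hx2)
          (AltAux.sumOver_nonneg_of_cone (treeSign_pos_iff.mp hp) hx1)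
      · exact le_antisymm
          (AltAux.sumOver_nonpos_of_cone (treeSign_neg_iff.mp hp).2 hx1)
          (AltAux.sumOver_nonneg_of_cone (treeSign_pos_iff.mp hq) hx2)
    have heq : Submodule.span ℝ (rootCone n E ∩ rootCone n E') =
        LinearMap.ker (AltAux.sumOver n Finset.univ) := by
      apply Submodule.eq_of_le_of_finrank_le hle
      rw [hVzrank, hrank]
    have hvmem : rootVec n (i₀, z) ∈
        Submodule.span ℝ (rootCone n E ∩ rootCone n E') := by
      rw [heq, LinearMap.mem_ker, AltAux.sumOver_rootVec]
      simp
    have hv0 := hker hvmem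
    rw [LinearMap.mem_ker, AltAux.sumOver_rootVec, if_pos hi₀, if_neg hzI] at hv0
    norm_num at hv0
  · -- sign compatibility implies full dimension
    intro hsc
    set U : Set (Fin n → ℝ) :=
      (AltAux.fullMap n E) '' ((Set.univ.pi fun _ => Set.Ioi (0:ℝ)) ×ˢ Set.univ) with hU
    set U' : Set (Fin n → ℝ) :=
      (AltAux.fullMap n E') '' ((Set.univ.pi fun _ => Set.Ioi (0:ℝ)) ×ˢ Set.univ) with hU'
    by_cases hcap : (U ∩ U').Nonempty
    · -- common interior point: the span is the full hyperplane
      obtain ⟨x, ⟨⟨g, t⟩, hgmem, hgx⟩, ⟨⟨g', t'⟩, hg'mem, hg'x⟩⟩ := hcap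
      have hgpos : ∀ a, 0 < g a := fun a => hgmem.1 a (Set.mem_univ a)
      have hg'pos : ∀ a, 0 < g' a := fun a => hg'mem.1 a (Set.mem_univ a)
      have ht : t = t' := by
        have h1 : AltAux.sumOver n Finset.univ x = t * n := by
          rw [← hgx, AltAux.sumOver_fullMap]
        have h2 : AltAux.sumOver n Finset.univ x = t' * n := by
          rw [← hg'x, AltAux.sumOver_fullMap]
        have hn' : (n:ℝ) ≠ 0 := Nat.cast_ne_zero.mpr hn.ne'
        have h3 := h1.symm.trans h2
        exact mul_right_cancel₀ hn' h3
      set x₀ : Fin n → ℝ := AltAux.coneMap n E g with hx₀def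
      have hx₀' : x₀ = AltAux.coneMap n E' g' := by
        have hfull := hgx.trans hg'x.symm
        rw [AltAux.fullMap_apply, AltAux.fullMap_apply, ht] at hfull
        exact add_right_cancel hfull
      have hx₀mem : x₀ ∈ rootCone n E ∩ rootCone n E' := by
        constructor
        · exact AltAux.coneMap_mem_rootCone g fun a _ => (hgpos a).le
        · rw [hx₀']
          exact AltAux.coneMap_mem_rootCone g' fun a _ => (hg'pos a).le
      have hspan : Submodule.span ℝ (rootCone n E ∩ rootCone n E') =
          LinearMap.ker (AltAux.sumOver n Finset.univ) := by
        apply le_antisymm hle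
        intro v hv
        rw [LinearMap.mem_ker, AltAux.sumOver_apply] at hv
        obtain ⟨h, hh⟩ := AltAux.mem_range_coneMap hconn.preconnected z v hv
        obtain ⟨h', hh'⟩ := AltAux.mem_range_coneMap hconn'.preconnected z v hv
        obtain ⟨ε, hεpos, hεE, hεE'⟩ := exists_eps n E E' g g' h h' hgpos hg'pos
        have hmem2 : x₀ + ε • v ∈ rootCone n E ∩ rootCone n E' := by
          constructor
          · have heq1 : x₀ + ε • v = AltAux.coneMap n E (g + ε • h) := by
              rw [map_add, map_smul, hh, hx₀def]
            rw [heq1]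
            refine AltAux.coneMap_mem_rootCone _ fun a ha => ?_
            simpa using hεE a ha
          · have heq2 : x₀ + ε • v = AltAux.coneMap n E' (g' + ε • h') := by
              rw [map_add, map_smul, hh', hx₀']
            rw [heq2]
            refine AltAux.coneMap_mem_rootCone _ fun a ha => ?_
            simpa using hεE' a ha
        have hvrep : v = ε⁻¹ • ((x₀ + ε • v) - x₀) := by
          rw [add_sub_cancel_left, smul_smul, inv_mul_cancel₀ hεpos.ne', one_smul]
        rw [hvrep]
        exact Submodule.smul_mem _ _ (Submodule.sub_mem _
          (Submodule.subset_span hmem2) (Submodule.subset_span hx₀mem))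
      rw [hspan]
      exact hVzrank
    · -- disjoint case: separation produces a sign incompatibility, contradiction
      exfalso
      rw [Set.not_nonempty_iff_eq_empty] at hcap
      have hdisj : Disjoint U U' := Set.disjoint_iff_inter_eq_empty.mpr hcap
      have hconvU : Convex ℝ U :=
        ((convex_pi fun _ _ => convex_Ioi 0).prod convex_univ).linear_image _
      have hconvU' : Convex ℝ U' :=
        ((convex_pi fun _ _ => convex_Ioi 0).prod convex_univ).linear_image _
      have hopenU : IsOpen U := by
        have hsurj : Function.Surjective (AltAux.fullMap n E) :=
          AltAux.fullMap_surjective hconn.preconnected hn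
        have hopen : IsOpenMap (AltAux.fullMap n E) := by
          have := ContinuousLinearMap.isOpenMap
            (LinearMap.toContinuousLinearMap (AltAux.fullMap n E))
            (by simpa using hsurj)
          simpa using this
        exact hopen _
          (((isOpen_set_pi Set.finite_univ fun _ _ => isOpen_Ioi)).prod isOpen_univ)
      obtain ⟨φ, u, hsep1, hsep2⟩ :=
        geometric_hahn_banach_open hconvU hopenU hconvU' hdisj
      have hmem1 : ∀ g : (Fin n × Fin n) → ℝ, (∀ a, 0 < g a) → ∀ t : ℝ,
          AltAux.fullMap n E (g, t) ∈ U :=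
        fun g hg t => ⟨(g, t), ⟨fun a _ => hg a, Set.mem_univ _⟩, rfl⟩
      have hmem1' : ∀ g : (Fin n × Fin n) → ℝ, (∀ a, 0 < g a) → ∀ t : ℝ,
          AltAux.fullMap n E' (g, t) ∈ U' :=
        fun g hg t => ⟨(g, t), ⟨fun a _ => hg a, Set.mem_univ _⟩, rfl⟩
      set onep : (Fin n × Fin n) → ℝ := fun _ => 1 with honep
      have honepos : ∀ a, 0 < onep a := fun _ => one_pos
      set x₀ : Fin n → ℝ := AltAux.coneMap n E onep with hx₀def
      set x₀' : Fin n → ℝ := AltAux.coneMap n E' onep with hx₀'def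
      have hfzero : ∀ (F : Finset (Fin n × Fin n)) (g : (Fin n × Fin n) → ℝ),
          AltAux.fullMap n F (g, 0) = AltAux.coneMap n F g := by
        intro F g
        rw [AltAux.fullMap_apply, zero_smul, add_zero]
      have hx₀lt : φ x₀ < u := by
        have := hsep1 _ (hmem1 onep honepos 0)
        rwa [hfzero] at this
      have hx₀'ge : u ≤ φ x₀' := by
        have := hsep2 _ (hmem1' onep honepos 0)
        rwa [hfzero] at this
      -- perturbation computation
      have hpert : ∀ (F : Finset (Fin n × Fin n)), ∀ a ∈ F, ∀ M : ℝ,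
          AltAux.coneMap n F (fun b => if b = a then 1 + M else 1) =
            AltAux.coneMap n F onep + M • rootVec n a := by
        intro F a ha M
        have hfun : (fun b => if b = a then 1 + M else (1:ℝ)) =
            onep + (fun b => if b = a then M else 0) := by
          funext b
          by_cases hb : b = a <;> simp [honep, hb]
        rw [hfun, map_add, AltAux.coneMap_single ha]
      have hEneg : ∀ a ∈ E, φ (rootVec n a) ≤ 0 := by
        intro a ha
        by_contra hpos0
        push_neg at hpos0
        have hlt : ∀ M : ℝ, 0 < M → φ x₀ + M * φ (rootVec n a) < u := by
          intro M hM
          have hgp : ∀ b, 0 < (fun b => if b = a then 1 + M else (1:ℝ)) b := by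
            intro b
            by_cases hb : b = a <;> simp [hb] <;> linarith
          have hmem := hsep1 _ (hmem1 _ hgp 0)
          rw [hfzero, hpert E a ha M, map_add, map_smul] at hmem
          simpa [smul_eq_mul] using hmem
        have h1 := hlt (max 1 ((u - φ x₀) / φ (rootVec n a)))
          (lt_of_lt_of_le one_pos (le_max_left _ _))
        have h2 : (u - φ x₀) / φ (rootVec n a) ≤
            max 1 ((u - φ x₀) / φ (rootVec n a)) := le_max_right _ _
        rw [div_le_iff₀ hpos0] at h2
        linarith
      have hE'pos : ∀ a ∈ E', 0 ≤ φ (rootVec n a) := by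
        intro a ha
        by_contra hneg0
        push_neg at hneg0
        have hgt : ∀ M : ℝ, 0 < M → u ≤ φ x₀' + M * φ (rootVec n a) := by
          intro M hM
          have hgp : ∀ b, 0 < (fun b => if b = a then 1 + M else (1:ℝ)) b := by
            intro b
            by_cases hb : b = a <;> simp [hb] <;> linarith
          have hmem := hsep2 _ (hmem1' _ hgp 0)
          rw [hfzero, hpert E' a ha M, map_add, map_smul] at hmem
          simpa [smul_eq_mul] using hmem
        have h1 := hgt (max 1 ((φ x₀' + 1 - u) / (-φ (rootVec n a))))
          (lt_of_lt_of_le one_pos (le_max_left _ _))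
        have h2 : (φ x₀' + 1 - u) / (-φ (rootVec n a)) ≤
            max 1 ((φ x₀' + 1 - u) / (-φ (rootVec n a))) := le_max_right _ _
        rw [div_le_iff₀ (neg_pos.mpr hneg0)] at h2
        linarith
      have hu0 : u ≤ 0 := by
        have hsc' : ∀ ε : ℝ, 0 < ε → u ≤ ε * φ x₀' := by
          intro ε hε
          have hgp : ∀ b, 0 < (fun _ => ε : (Fin n × Fin n) → ℝ) b := fun _ => hε
          have hmem := hsep2 _ (hmem1' _ hgp 0)
          rw [hfzero] at hmem
          have hsm : (fun _ => ε : (Fin n × Fin n) → ℝ) = ε • onep := by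
            funext b; simp [honep]
          rw [hsm, map_smul, map_smul] at hmem
          simpa [smul_eq_mul] using hmem
        by_contra hcon
        push_neg at hcon
        have hc : 0 < φ x₀' := lt_of_lt_of_le hcon hx₀'ge
        have hmid := hsc' (u / (2 * φ x₀')) (by positivity)
        have hcalc : u / (2 * φ x₀') * φ x₀' = u / 2 := by
          field_simp
        rw [hcalc] at hmid
        linarith
      have hsum : φ x₀ = ∑ a ∈ E, φ (rootVec n a) := by
        rw [hx₀def, AltAux.coneMap_apply, map_sum]
        simp [honep]
      have hstrict : ∃ a ∈ E, φ (rootVec n a) < 0 := by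
        by_contra hno
        push_neg at hno
        have : 0 ≤ φ x₀ := hsum ▸ Finset.sum_nonneg hno
        linarith
      set y : Fin n → ℝ := fun k => φ (Pi.single k 1) with hy
      have hroot_eq : ∀ a : Fin n × Fin n, φ (rootVec n a) = y a.1 - y a.2 := by
        intro a
        have hsingle : rootVec n a = Pi.single a.1 1 - Pi.single a.2 1 := by
          funext k
          simp [rootVec, Pi.single_apply]
        rw [hsingle, map_sub]
      obtain ⟨a₀, ha₀, ha₀lt⟩ := hstrict
      refine hsc (exists_bad_I n E E' hn hconn.preconnected hconn'.preconnected y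
        (fun a ha => ?_) (fun a ha => ?_) ⟨a₀, ha₀, ?_⟩)
      · have := hEneg a ha
        rw [hroot_eq] at this
        linarith
      · have := hE'pos a ha
        rw [hroot_eq] at this
        linarith
      · have := ha₀lt
        rw [hroot_eq] at this
        linarith
end

section
/- Every point of a resonance hyperplane lies on the boundary of some root cone: if x ∈ ℝ^n satisfies Σ_{i∈[n]} x_i = 0 and Σ_{i∈I} x_i = 0 for some nonempty proper subset I ⊊ [n], then there exists an acyclic alternating directed graph G on [n] with at most n − 2 arcs, having no arcs between I and [n]−I, such that x ∈ 𝒞(G). (Second half of the proof of Proposition 3.8.) -/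
open Finset

lemma underlying_swap (n : ℕ) (E : Finset (Fin n × Fin n)) (i j : Fin n) :
    underlying n (insert (i, j) E) = underlying n (insert (j, i) E) := by
  ext a b
  simp only [underlying, Finset.mem_insert, Prod.ext_iff]
  tauto

lemma underlying_empty_acyclic (n : ℕ) :
    (underlying n (∅ : Finset (Fin n × Fin n))).IsAcyclic := by
  intro v c hc
  cases c with
  | nil => exact hc.ne_nil rfl
  | cons h p => exact absurd h.2 (by simp)

lemma pendant (n : ℕ) (E : Finset (Fin n × Fin n)) (i j : Fin n) (hij : i ≠ j)
    (hfresh : ∀ a ∈ E, a.1 ≠ i ∧ a.2 ≠ i)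
    (hacy : (underlying n E).IsAcyclic) :
    (underlying n (insert (i, j) E)).IsAcyclic := by
  have hnbr : ∀ u, (underlying n (insert (i, j) E)).Adj i u → u = j := by
    intro u hu
    rcases hu.2 with h | h
    · rcases Finset.mem_insert.mp h with h | h
      · exact (Prod.ext_iff.mp h).2
      · exact absurd rfl (hfresh _ h).1
    · rcases Finset.mem_insert.mp h with h | h
      · exact absurd (Prod.ext_iff.mp h).2 hij
      · exact absurd rfl (hfresh _ h).2
  intro v c hc
  by_cases hi : i ∈ c.support
  · have hc' := hc.rotate hi
    revert hc'
    generalize c.rotate i hi = c'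
    intro hc'
    cases c' with
    | nil => exact hc'.ne_nil rfl
    | cons h p =>
      rename_i b
      have hb : b = j := hnbr _ h
      have hpn : b ≠ i := fun hbi => hij (hb ▸ hbi).symm
      obtain ⟨w, h2, p2, rfl⟩ := SimpleGraph.Walk.exists_eq_cons_of_ne hpn p
      obtain ⟨y, q, h', hpq⟩ := SimpleGraph.Walk.exists_cons_eq_concat h2 p2
      have hy : y = j := hnbr _ h'.symm
      have ht : (SimpleGraph.Walk.cons h (SimpleGraph.Walk.cons h2 p2)).IsTrail :=
        hc'.isCircuit.isTrail
      rw [SimpleGraph.Walk.isTrail_cons] at ht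
      refine ht.2 ?_
      rw [hpq, SimpleGraph.Walk.edges_concat]
      subst hy
      subst hb
      simp [Sym2.eq_swap]
  · have hE : ∀ e ∈ c.edges, e ∈ (underlying n E).edgeSet := by
      intro e he
      revert he
      induction e using Sym2.ind with
      | _ a b =>
        intro he
        have ha := c.fst_mem_support_of_mem_edges he
        have hadj := c.adj_of_mem_edges he
        rw [SimpleGraph.mem_edgeSet]
        refine ⟨hadj.1, ?_⟩
        rcases hadj.2 with h | h <;> rcases Finset.mem_insert.mp h with h | h
        · rcases Prod.ext_iff.mp h with ⟨rfl, rfl⟩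
          exact absurd ha hi
        · exact Or.inl h
        · have hb := c.snd_mem_support_of_mem_edges he
          rcases Prod.ext_iff.mp h with ⟨rfl, rfl⟩
          exact absurd hb hi
        · exact Or.inr h
    exact hacy (c.transfer _ hE) (hc.transfer hE)

lemma exists_pos_neg {n : ℕ} (P : Finset (Fin n)) (x : Fin n → ℝ)
    (h : ∑ i ∈ P, x i = 0) (k : Fin n) (hk : k ∈ P) (hxk : x k ≠ 0) :
    (∃ i ∈ P, 0 < x i) ∧ (∃ j ∈ P, x j < 0) := by
  constructor
  · by_contra hp
    push_neg at hp
    have := (Finset.sum_eq_zero_iff_of_nonpos (fun i hi => hp i hi)).mp h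
    exact hxk (this k hk)
  · by_contra hp
    push_neg at hp
    have := (Finset.sum_eq_zero_iff_of_nonneg (fun i hi => hp i hi)).mp h
    exact hxk (this k hk)

lemma key_s10 (n : ℕ) (I : Finset (Fin n)) (s : Finset (Fin n)) :
    ∀ x : Fin n → ℝ,
    (∀ i, x i ≠ 0 → i ∈ s) →
    (∑ i ∈ I, x i = 0) → (∑ i ∈ Iᶜ, x i = 0) →
    ∃ E : Finset (Fin n × Fin n),
      (∀ a ∈ E, 0 < x a.1 ∧ x a.2 < 0) ∧
      (underlying n E).IsAcyclic ∧
      (∀ a ∈ E, (a.1 ∈ I ↔ a.2 ∈ I)) ∧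
      E.card ≤ ((s ∩ I).card - 1) + ((s \ I).card - 1) ∧
      x ∈ {x | ∃ f : Fin n × Fin n → ℝ, (∀ a, 0 ≤ f a) ∧
        x = ∑ a ∈ E, f a • rootVec n a} := by
  induction s using Finset.strongInduction with
  | _ s ih =>
    intro x hsupp hI hIc
    by_cases hz : ∀ i, x i = 0
    · refine ⟨∅, by simp, underlying_empty_acyclic n, by simp, by simp, ⟨0, by simp, ?_⟩⟩
      funext m
      simp [hz m]
    · push_neg at hz
      obtain ⟨k, hk⟩ := hz
      -- find i positive, j negative, in the same part
      have hij : ∃ i j : Fin n, 0 < x i ∧ x j < 0 ∧ (i ∈ I ↔ j ∈ I) := by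
        by_cases hkI : k ∈ I
        · obtain ⟨⟨i, hiP, hipos⟩, ⟨j, hjP, hjneg⟩⟩ := exists_pos_neg I x hI k hkI hk
          exact ⟨i, j, hipos, hjneg, by simp [hiP, hjP]⟩
        · obtain ⟨⟨i, hiP, hipos⟩, ⟨j, hjP, hjneg⟩⟩ :=
            exists_pos_neg Iᶜ x hIc k (Finset.mem_compl.mpr hkI) hk
          rw [Finset.mem_compl] at hiP hjP
          exact ⟨i, j, hipos, hjneg, by simp [hiP, hjP]⟩
      obtain ⟨i, j, hipos, hjneg, hiffI⟩ := hij
      have hijne : i ≠ j := fun h => absurd (h ▸ hipos) (not_lt.mpr hjneg.le)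
      set t : ℝ := min (x i) (-x j) with ht_def
      have ht : 0 < t := lt_min hipos (by linarith)
      have hti : t ≤ x i := min_le_left _ _
      have htj : t ≤ -x j := min_le_right _ _
      set x' : Fin n → ℝ := fun m => x m - t * rootVec n (i, j) m with hx'_def
      have hx'i : x' i = x i - t := by simp [hx'_def, rootVec, hijne]
      have hx'j : x' j = x j + t := by
        simp [hx'_def, rootVec, hijne.symm]
      have hx'other : ∀ m, m ≠ i → m ≠ j → x' m = x m := by
        intro m hmi hmj; simp [hx'_def, rootVec, hmi, hmj]
      have hx'i0 : 0 ≤ x' i := by rw [hx'i]; linarith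
      have hx'j0 : x' j ≤ 0 := by rw [hx'j]; linarith
      set k₀ : Fin n := if x i ≤ -x j then i else j with hk₀_def
      have hk₀ij : k₀ = i ∨ k₀ = j := by
        by_cases h : x i ≤ -x j <;> simp [hk₀_def, h]
      have hx'k₀ : x' k₀ = 0 := by
        by_cases h : x i ≤ -x j
        · simp only [hk₀_def, if_pos h]
          rw [hx'i, ht_def, min_eq_left h]; ring
        · simp only [hk₀_def, if_neg h]
          rw [hx'j, ht_def, min_eq_right (le_of_not_ge h)]; ring
      have hk₀s : k₀ ∈ s := by
        rcases hk₀ij with h | h <;> rw [h]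
        · exact hsupp i (ne_of_gt hipos)
        · exact hsupp j (ne_of_lt hjneg)
      set s' : Finset (Fin n) := s.erase k₀ with hs'_def
      have hsub : s' ⊂ s := Finset.erase_ssubset hk₀s
      have hsupp' : ∀ m, x' m ≠ 0 → m ∈ s' := by
        intro m hm
        rw [Finset.mem_erase]
        refine ⟨fun h => hm (h ▸ hx'k₀), ?_⟩
        by_cases hmi : m = i
        · exact hmi ▸ hsupp i (ne_of_gt hipos)
        by_cases hmj : m = j
        · exact hmj ▸ hsupp j (ne_of_lt hjneg)
        · exact hsupp m (by rwa [hx'other m hmi hmj] at hm)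
      have hsumroot : ∀ P : Finset (Fin n), (i ∈ P ↔ j ∈ P) →
          ∑ m ∈ P, rootVec n (i, j) m = 0 := by
        intro P hP
        simp only [rootVec]
        rw [Finset.sum_sub_distrib]
        simp only [Finset.sum_ite_eq' P, Finset.sum_boole]
        by_cases h : i ∈ P
        · simp [h, hP.mp h]
        · have hj : j ∉ P := fun hj => h (hP.mpr hj)
          simp [h, hj]
      have hsum' : ∀ P : Finset (Fin n), (i ∈ P ↔ j ∈ P) →
          (∑ m ∈ P, x m = 0) → ∑ m ∈ P, x' m = 0 := by
        intro P hP hPx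
        simp only [hx'_def]
        rw [Finset.sum_sub_distrib, hPx, ← Finset.mul_sum, hsumroot P hP]
        ring
      have hiffIc : (i ∈ Iᶜ ↔ j ∈ Iᶜ) := by simp [hiffI]
      obtain ⟨E', hsig', hacy', hpart', hcard', f', hf'0, hf'⟩ :=
        ih s' hsub x' hsupp' (hsum' I hiffI hI) (hsum' Iᶜ hiffIc hIc)
      have hfresh : ∀ a ∈ E', a.1 ≠ k₀ ∧ a.2 ≠ k₀ := by
        intro a ha
        obtain ⟨h1, h2⟩ := hsig' a ha
        constructor
        · intro h; rw [h, hx'k₀] at h1; exact lt_irrefl 0 h1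
        · intro h; rw [h, hx'k₀] at h2; exact lt_irrefl 0 h2
      have hnotmem : (i, j) ∉ E' := by
        intro h
        rcases hk₀ij with hk' | hk'
        · exact (hfresh _ h).1 (hk' ▸ rfl)
        · exact (hfresh _ h).2 (hk' ▸ rfl)
      refine ⟨insert (i, j) E', ?_, ?_, ?_, ?_, ?_⟩
      · -- signs
        intro a ha
        rcases Finset.mem_insert.mp ha with rfl | ha
        · exact ⟨hipos, hjneg⟩
        · obtain ⟨h1, h2⟩ := hsig' a ha
          constructor
          · by_cases hai : a.1 = i
            · rw [hai]; exact hipos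
            · have haj : a.1 ≠ j := fun h => absurd (h ▸ h1) (not_lt.mpr hx'j0)
              rwa [hx'other a.1 hai haj] at h1
          · by_cases haj : a.2 = j
            · rw [haj]; exact hjneg
            · have hai : a.2 ≠ i := fun h => absurd (h ▸ h2) (not_lt.mpr hx'i0)
              rwa [hx'other a.2 hai haj] at h2
      · -- acyclic
        rcases hk₀ij with hk' | hk'
        · exact pendant n E' i j hijne
            (fun a ha => ⟨fun h => (hfresh a ha).1 (h.trans hk'.symm),
              fun h => (hfresh a ha).2 (h.trans hk'.symm)⟩) hacy'
        · rw [underlying_swap]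
          exact pendant n E' j i hijne.symm
            (fun a ha => ⟨fun h => (hfresh a ha).1 (h.trans hk'.symm),
              fun h => (hfresh a ha).2 (h.trans hk'.symm)⟩) hacy'
      · -- part
        intro a ha
        rcases Finset.mem_insert.mp ha with rfl | ha
        · exact hiffI
        · exact hpart' a ha
      · -- card
        rw [Finset.card_insert_of_notMem hnotmem]
        have hiI : i ∈ I ∨ i ∉ I := em _
        rcases hiI with hiI | hiI
        · have hjI : j ∈ I := hiffI.mp hiI
          have hk₀I : k₀ ∈ I := by rcases hk₀ij with h | h <;> rw [h] <;> assumption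
          have h1 : s' ∩ I = (s ∩ I).erase k₀ := by
            ext m; simp only [hs'_def, Finset.mem_erase, Finset.mem_inter]; tauto
          have h2 : s' \ I = s \ I := by
            ext m
            simp only [hs'_def, Finset.mem_sdiff, Finset.mem_erase]
            constructor
            · rintro ⟨⟨_, hm⟩, hmI⟩; exact ⟨hm, hmI⟩
            · rintro ⟨hm, hmI⟩
              exact ⟨⟨fun hmk => hmI (hmk.symm ▸ hk₀I), hm⟩, hmI⟩
          have hk₀sI : k₀ ∈ s ∩ I := Finset.mem_inter.mpr ⟨hk₀s, hk₀I⟩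
          have h3 : (s' ∩ I).card = (s ∩ I).card - 1 := by
            rw [h1, Finset.card_erase_of_mem hk₀sI]
          have h4 : 2 ≤ (s ∩ I).card := by
            have hi_mem : i ∈ s ∩ I :=
              Finset.mem_inter.mpr ⟨hsupp i (ne_of_gt hipos), hiI⟩
            have hj_mem : j ∈ s ∩ I :=
              Finset.mem_inter.mpr ⟨hsupp j (ne_of_lt hjneg), hjI⟩
            have := Finset.one_lt_card.mpr ⟨i, hi_mem, j, hj_mem, hijne⟩
            omega
          rw [h3, h2] at hcard'
          omega
        · have hjI : j ∉ I := fun h => hiI (hiffI.mpr h)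
          have hk₀I : k₀ ∉ I := by rcases hk₀ij with h | h <;> rw [h] <;> assumption
          have h1 : s' \ I = (s \ I).erase k₀ := by
            ext m; simp only [hs'_def, Finset.mem_erase, Finset.mem_sdiff]; tauto
          have h2 : s' ∩ I = s ∩ I := by
            ext m
            simp only [hs'_def, Finset.mem_inter, Finset.mem_erase]
            constructor
            · rintro ⟨⟨_, hm⟩, hmI⟩; exact ⟨hm, hmI⟩
            · rintro ⟨hm, hmI⟩
              exact ⟨⟨fun hmk => hk₀I (hmk ▸ hmI), hm⟩, hmI⟩
          have hk₀sI : k₀ ∈ s \ I := Finset.mem_sdiff.mpr ⟨hk₀s, hk₀I⟩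
          have h3 : (s' \ I).card = (s \ I).card - 1 := by
            rw [h1, Finset.card_erase_of_mem hk₀sI]
          have h4 : 2 ≤ (s \ I).card := by
            have hi_mem : i ∈ s \ I :=
              Finset.mem_sdiff.mpr ⟨hsupp i (ne_of_gt hipos), hiI⟩
            have hj_mem : j ∈ s \ I :=
              Finset.mem_sdiff.mpr ⟨hsupp j (ne_of_lt hjneg), hjI⟩
            have := Finset.one_lt_card.mpr ⟨i, hi_mem, j, hj_mem, hijne⟩
            omega
          rw [h3, h2] at hcard'
          omega
      · -- cone
        refine ⟨Function.update f' (i, j) t, ?_, ?_⟩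
        · intro a
          by_cases h : a = (i, j)
          · rw [h, Function.update_self]; exact ht.le
          · rw [Function.update_of_ne h]; exact hf'0 a
        · rw [Finset.sum_insert hnotmem, Function.update_self]
          have hrest : ∑ a ∈ E', Function.update f' (i, j) t a • rootVec n a
              = ∑ a ∈ E', f' a • rootVec n a := by
            apply Finset.sum_congr rfl
            intro a ha
            rw [Function.update_of_ne (fun h => hnotmem (by rw [← h]; exact ha))]
          rw [hrest, ← hf']
          funext m
          simp only [Pi.add_apply, Pi.smul_apply, smul_eq_mul, hx'_def]
          ring

/-- second half of the proof of Proposition 3.8. If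
`x ∈ ℝ^n` satisfies `Σ_{i ∈ [n]} x i = 0` and `Σ_{i ∈ I} x i = 0` for some nonempty
proper subset `I ⊊ [n]`, then there is an acyclic alternating directed graph `G` on
`[n]` with at most `n - 2` arcs, having no arcs between `I` and `[n] - I`, such that
`x ∈ 𝒞(G)`. -/
theorem resonance_point_on_cone_boundary (n : ℕ) (x : Fin n → ℝ)
    (hsum : ∑ i, x i = 0) (I : Finset (Fin n)) (hne : I.Nonempty)
    (hproper : I ≠ Finset.univ) (hI : ∑ i ∈ I, x i = 0) :
    ∃ E : Finset (Fin n × Fin n), IsAlternating n E ∧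
      (underlying n E).IsAcyclic ∧ E.card ≤ n - 2 ∧
      (∀ a ∈ E, (a.1 ∈ I ↔ a.2 ∈ I)) ∧ x ∈ rootCone n E := by
  have hIc : ∑ i ∈ Iᶜ, x i = 0 := by
    have h := Finset.sum_add_sum_compl I x
    rw [hI, hsum] at h
    linarith
  obtain ⟨E, hsig, hacy, hpart, hcard, hcone⟩ :=
    key_s10 n I Finset.univ x (fun i _ => Finset.mem_univ i) hI hIc
  refine ⟨E, ?_, hacy, ?_, hpart, hcone⟩
  · intro v
    by_cases hv : 0 < x v
    · left
      intro a ha h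
      have h2 := (hsig a ha).2
      rw [h] at h2
      linarith
    · right
      intro a ha h
      have h1 := (hsig a ha).1
      rw [h] at h1
      exact hv h1
  · have e1 : Finset.univ ∩ I = I := Finset.univ_inter I
    have e2 : Finset.univ \ I = Iᶜ := (Finset.compl_eq_univ_sdiff I).symm
    rw [e1, e2] at hcard
    have h1 : 1 ≤ I.card := Finset.card_pos.mpr hne
    have h2 : 1 ≤ Iᶜ.card := by
      refine Finset.card_pos.mpr ?_
      rcases Finset.eq_empty_or_nonempty Iᶜ with h | h
      · exact absurd (by simpa [Finset.compl_eq_empty_iff] using h) hproper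
      · exact h
    have h3 : I.card + Iᶜ.card = n := by
      rw [Finset.card_add_card_compl]
      simp
    omega
end

section
/- Let ω : ℝ^{n+1} → ℝ^{n+1} be the cyclic coordinate permutation ω(x_1,...,x_{n+1}) = (x_2,...,x_{n+1},x_1), and let 𝒞 = 𝒞(K_{n+1}^+) be the positive root cone, i.e., the cone of nonnegative combinations of {e_i − e_j : 1 ≤ i < j ≤ n+1}. Then the cones 𝒞, ω𝒞, ω²𝒞, ..., ω^n𝒞 have pairwise disjoint interiors (relative to V_∅) and their union is all of V_∅ = {x ∈ ℝ^{n+1} : Σ x_i = 0}. (Lemma 3.11.) -/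
open Finset

/-- The arc set of the complete graph `K_m^+` on `[m]` with all edges directed from
smaller to larger vertices. -/
def posArcs (m : ℕ) : Finset (Fin m × Fin m) :=
  Finset.univ.filter (fun a : Fin m × Fin m => a.1 < a.2)

/-- The positive root cone: nonnegative combinations of `e_i - e_j` for `i < j`. -/
def posCone (m : ℕ) : Set (Fin m → ℝ) := rootCone m (posArcs m)

/-- The cyclic coordinate permutation `ω^k` of `ℝ^{n+1}`: `(ω^k x)_i = x_{i+k}`
(indices mod `n+1`). -/
def cyc (n : ℕ) (k : Fin (n + 1)) (x : Fin (n + 1) → ℝ) : Fin (n + 1) → ℝ :=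
  fun i => x (i + k)

/-- prefix sum of the first `t` coordinates -/
def psum {m : ℕ} (x : Fin m → ℝ) (t : ℕ) : ℝ :=
  ∑ i : Fin m, if (i : ℕ) < t then x i else 0

lemma psum_zero {m : ℕ} (x : Fin m → ℝ) : psum x 0 = 0 := by
  simp [psum]

lemma psum_succ {m : ℕ} (x : Fin m → ℝ) (t : ℕ) (ht : t < m) :
    psum x (t + 1) = psum x t + x ⟨t, ht⟩ := by
  unfold psum
  have : ∀ i : Fin m, (if (i : ℕ) < t + 1 then x i else 0)
      = (if (i : ℕ) < t then x i else 0) + (if i = ⟨t, ht⟩ then x i else 0) := by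
    intro i
    rcases lt_trichotomy (i : ℕ) t with h | h | h
    · simp [h, Nat.lt_succ_of_lt h, Fin.ext_iff, h.ne]
    · simp [h, Fin.ext_iff]
    · have h1 : ¬ (i : ℕ) < t + 1 := by omega
      have h2 : ¬ (i : ℕ) < t := by omega
      have h3 : (i : ℕ) ≠ t := by omega
      simp [h1, h2, Fin.ext_iff, h3]
  rw [Finset.sum_congr rfl (fun i _ => this i), Finset.sum_add_distrib]
  congr 1
  simp

lemma psum_of_ge {m : ℕ} (x : Fin m → ℝ) (t : ℕ) (ht : m ≤ t) :
    psum x t = ∑ i, x i := by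
  unfold psum
  apply Finset.sum_congr rfl
  intro i _
  have : (i : ℕ) < t := lt_of_lt_of_le i.isLt ht
  simp [this]

/-- sum of a root vector over a finite set -/
lemma sum_rootVec {m : ℕ} (A : Finset (Fin m)) (a : Fin m × Fin m) :
    ∑ i ∈ A, rootVec m a i
      = (if a.1 ∈ A then (1:ℝ) else 0) - (if a.2 ∈ A then 1 else 0) := by
  unfold rootVec
  rw [Finset.sum_sub_distrib]
  congr 1 <;> simp [Finset.sum_ite_eq']

lemma sum_rootVec_univ {m : ℕ} (a : Fin m × Fin m) :
    ∑ i, rootVec m a i = 0 := by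
  rw [sum_rootVec]; simp

/-- total of a cone member is zero -/
lemma posCone_sum_eq_zero {m : ℕ} {x : Fin m → ℝ} (hx : x ∈ posCone m) :
    ∑ i, x i = 0 := by
  obtain ⟨f, -, rfl⟩ := hx
  simp only [Finset.sum_apply, Pi.smul_apply, smul_eq_mul]
  rw [Finset.sum_comm]
  apply Finset.sum_eq_zero
  intro a _
  rw [← Finset.mul_sum, sum_rootVec_univ, mul_zero]

/-- prefix sums of a cone member are nonnegative -/
lemma posCone_psum_nonneg {m : ℕ} {x : Fin m → ℝ} (hx : x ∈ posCone m) (t : ℕ) :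
    0 ≤ psum x t := by
  obtain ⟨f, hf, rfl⟩ := hx
  unfold psum
  simp only [Finset.sum_apply, Pi.smul_apply, smul_eq_mul]
  have : ∀ i : Fin m, (if (i:ℕ) < t then ∑ a ∈ posArcs m, f a * rootVec m a i else 0)
      = ∑ a ∈ posArcs m, f a * (if (i:ℕ) < t then rootVec m a i else 0) := by
    intro i
    split
    · rfl
    · simp
  rw [Finset.sum_congr rfl (fun i _ => this i), Finset.sum_comm]
  apply Finset.sum_nonneg
  intro a ha
  have ha' : a.1 < a.2 := by
    simpa [posArcs] using ha
  rw [← Finset.mul_sum]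
  apply mul_nonneg (hf a)
  have : ∑ i : Fin m, (if (i:ℕ) < t then rootVec m a i else 0)
      = ∑ i ∈ Finset.univ.filter (fun i : Fin m => (i:ℕ) < t), rootVec m a i := by
    rw [Finset.sum_filter]
  rw [this, sum_rootVec]
  have h12 : (a.2 : ℕ) < t → (a.1 : ℕ) < t := fun h => lt_trans ha' h
  by_cases h1 : (a.1 : ℕ) < t <;> by_cases h2 : (a.2 : ℕ) < t
  · simp [h1, h2]
  · simp [h1, h2]
  · exact absurd (h12 h2) h1
  · simp [h1, h2]

lemma posCone_zero (m : ℕ) : (0 : Fin m → ℝ) ∈ posCone m :=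
  ⟨0, fun _ => le_refl 0, by simp⟩

lemma posCone_add {m : ℕ} {x y : Fin m → ℝ} (hx : x ∈ posCone m) (hy : y ∈ posCone m) :
    x + y ∈ posCone m := by
  obtain ⟨f, hf, rfl⟩ := hx
  obtain ⟨g, hg, rfl⟩ := hy
  exact ⟨f + g, fun a => add_nonneg (hf a) (hg a), by
    rw [← Finset.sum_add_distrib]
    apply Finset.sum_congr rfl
    intro a _
    simp [add_smul]⟩

lemma posCone_smul {m : ℕ} {x : Fin m → ℝ} {c : ℝ} (hc : 0 ≤ c) (hx : x ∈ posCone m) :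
    c • x ∈ posCone m := by
  obtain ⟨f, hf, rfl⟩ := hx
  exact ⟨c • f, fun a => mul_nonneg hc (hf a), by
    rw [Finset.smul_sum]
    apply Finset.sum_congr rfl
    intro a _
    simp [smul_smul]⟩

lemma rootVec_mem_posCone {m : ℕ} {p q : Fin m} (h : p < q) :
    rootVec m (p, q) ∈ posCone m := by
  refine ⟨fun a => if a = (p, q) then 1 else 0, fun a => by positivity, ?_⟩
  have hmem : (p, q) ∈ posArcs m := by simp [posArcs, h]
  rw [show (∑ a ∈ posArcs m, (fun a => if a = (p, q) then (1:ℝ) else 0) a • rootVec m a)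
      = ∑ a ∈ posArcs m, (if a = (p, q) then rootVec m a else 0) from
    Finset.sum_congr rfl (fun a _ => by split <;> simp [*]),
    Finset.sum_ite_eq' (posArcs m) (p, q) (fun a => rootVec m a), if_pos hmem]


/-- telescoping identity -/
lemma telescope {n : ℕ} (x : Fin (n+1) → ℝ) (hx : ∑ i, x i = 0) :
    x = ∑ t : Fin n, psum x ((t : ℕ) + 1) •
      rootVec (n+1) (Fin.castSucc t, Fin.succ t) := by
  funext i
  simp only [Finset.sum_apply, Pi.smul_apply, smul_eq_mul]
  unfold rootVec
  simp only [mul_sub]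
  rw [Finset.sum_sub_distrib]
  have e1 : ∀ t : Fin n, psum x ((t:ℕ)+1) * (if i = Fin.castSucc t then (1:ℝ) else 0)
      = if i = Fin.castSucc t then psum x ((t:ℕ)+1) else 0 := by
    intro t; split <;> simp
  have e2 : ∀ t : Fin n, psum x ((t:ℕ)+1) * (if i = Fin.succ t then (1:ℝ) else 0)
      = if i = Fin.succ t then psum x ((t:ℕ)+1) else 0 := by
    intro t; split <;> simp
  rw [Finset.sum_congr rfl (fun t _ => e1 t), Finset.sum_congr rfl (fun t _ => e2 t)]
  have hS1 : (∑ t : Fin n, if i = Fin.castSucc t then psum x ((t:ℕ)+1) else 0)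
      = if h : (i : ℕ) < n then psum x ((i:ℕ)+1) else 0 := by
    split
    · rename_i h
      have key : ∀ t : Fin n, (i = Fin.castSucc t) ↔ (t = ⟨(i:ℕ), h⟩) := by
        intro t
        rw [Fin.ext_iff, Fin.ext_iff]
        simp only [Fin.coe_castSucc, Fin.val_mk]
        omega
      simp_rw [key]
      rw [Finset.sum_ite_eq' Finset.univ (⟨(i:ℕ), h⟩ : Fin n)
        (fun t => psum x ((t:ℕ)+1))]
      simp
    · rename_i h
      apply Finset.sum_eq_zero
      intro t _
      rw [if_neg]
      intro he
      exact h (by rw [Fin.ext_iff] at he; simp at he; omega)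
  have hS2 : (∑ t : Fin n, if i = Fin.succ t then psum x ((t:ℕ)+1) else 0)
      = if h : 1 ≤ (i : ℕ) then psum x (i:ℕ) else 0 := by
    split
    · rename_i h
      have hi : (i:ℕ) - 1 < n := by omega
      have key : ∀ t : Fin n, (i = Fin.succ t) ↔ (t = ⟨(i:ℕ) - 1, hi⟩) := by
        intro t
        rw [Fin.ext_iff, Fin.ext_iff]
        simp only [Fin.val_succ, Fin.val_mk]
        omega
      simp_rw [key]
      rw [Finset.sum_ite_eq' Finset.univ (⟨(i:ℕ) - 1, hi⟩ : Fin n)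
        (fun t => psum x ((t:ℕ)+1))]
      simp only [Finset.mem_univ, if_pos, Fin.val_mk]
      congr 1
      omega
    · rename_i h
      apply Finset.sum_eq_zero
      intro t _
      rw [if_neg]
      intro he
      exact h (by rw [Fin.ext_iff] at he; simp at he; omega)
  rw [hS1, hS2]
  have htot : psum x (n + 1) = 0 := by
    rw [psum_of_ge x (n+1) (le_refl _), hx]
  by_cases h1 : (i : ℕ) < n <;> by_cases h2 : 1 ≤ (i : ℕ)
  · rw [dif_pos h1, dif_pos h2, psum_succ x (i:ℕ) (by omega)]
    have : (⟨(i:ℕ), by omega⟩ : Fin (n+1)) = i := by simp [Fin.ext_iff]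
    rw [this]
    ring
  · -- i = 0
    have h0 : (i : ℕ) = 0 := by omega
    rw [dif_pos h1, dif_neg h2]
    rw [show (i:ℕ) + 1 = 0 + 1 by omega, psum_succ x 0 (by omega), psum_zero]
    have : (⟨0, by omega⟩ : Fin (n+1)) = i := by simp [Fin.ext_iff, h0]
    rw [this]; ring
  · -- i = n (last)
    have h0 : (i : ℕ) = n := by omega
    rw [dif_neg h1, dif_pos h2]
    have : psum x (n+1) = psum x n + x ⟨n, by omega⟩ := psum_succ x n (by omega)
    rw [htot] at this
    have hxi : (⟨n, by omega⟩ : Fin (n+1)) = i := by simp [Fin.ext_iff, h0]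
    rw [h0, ← hxi]
    linarith [this]
  · -- n = 0
    have h0 : (i : ℕ) = 0 ∧ n = 0 := by omega
    rw [dif_neg h1, dif_neg h2]
    have : psum x 1 = psum x 0 + x ⟨0, by omega⟩ := psum_succ x 0 (by omega)
    rw [psum_zero, zero_add] at this
    obtain ⟨hi0, hn0⟩ := h0
    subst hn0
    have h1' : psum x 1 = 0 := by simpa using htot
    have hxi : (⟨0, by omega⟩ : Fin (0+1)) = i := by simp [Fin.ext_iff, hi0]
    rw [← hxi]
    linarith [this, h1']

/-- reverse characterization -/
lemma mem_posCone_of {n : ℕ} (x : Fin (n+1) → ℝ) (hx : ∑ i, x i = 0)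
    (hp : ∀ t, 0 ≤ psum x t) : x ∈ posCone (n+1) := by
  rw [telescope x hx]
  have : ∀ t : Fin n, psum x ((t:ℕ)+1) •
      rootVec (n+1) (Fin.castSucc t, Fin.succ t) ∈ posCone (n+1) := by
    intro t
    exact posCone_smul (hp _) (rootVec_mem_posCone Fin.castSucc_lt_succ)
  induction (Finset.univ : Finset (Fin n)) using Finset.induction with
  | empty => simpa using posCone_zero (n+1)
  | insert _ _ hnot ih =>
    rw [Finset.sum_insert hnot]
    exact posCone_add (this _) ih

lemma cyc_cyc {n : ℕ} (a b : Fin (n+1)) (x : Fin (n+1) → ℝ) :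
    cyc n a (cyc n b x) = cyc n (a + b) x := by
  funext i
  simp [cyc, add_assoc]

lemma cyc_zero {n : ℕ} (x : Fin (n+1) → ℝ) : cyc n 0 x = x := by
  funext i
  simp [cyc]

lemma sum_cyc {n : ℕ} (k : Fin (n+1)) (x : Fin (n+1) → ℝ) :
    ∑ i, cyc n k x i = ∑ i, x i := by
  exact Fintype.sum_equiv (Equiv.addRight k) _ _ (fun i => rfl)

/-- key computation: prefix sums of a rotated vector -/
lemma psum_cyc {n : ℕ} (k : Fin (n+1)) (x : Fin (n+1) → ℝ) (hx : ∑ i, x i = 0) :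
    ∀ t ≤ n + 1, psum (cyc n k x) t =
      (if t + (k:ℕ) ≤ n + 1 then psum x (t + (k:ℕ)) else psum x (t + (k:ℕ) - (n+1)))
        - psum x (k:ℕ) := by
  intro t
  induction t with
  | zero =>
    intro _
    have hk := k.isLt
    rw [psum_zero, if_pos (by omega)]
    simp
  | succ t ih =>
    intro ht
    have ht' : t < n + 1 := by omega
    rw [psum_succ _ t ht', ih (by omega)]
    have hz : cyc n k x ⟨t, ht'⟩ = x ((⟨t, ht'⟩ : Fin (n+1)) + k) := rfl
    have hval : Fin.val ((⟨t, ht'⟩ : Fin (n+1)) + k) = (t + (k:ℕ)) % (n+1) :=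
      Fin.val_add _ _
    have htotal : psum x (n+1) = 0 := by rw [psum_of_ge _ _ (le_refl _), hx]
    rcases lt_trichotomy (t + (k:ℕ)) (n+1) with hc | hc | hc
    · -- no wrap yet
      have hm : (t + (k:ℕ)) % (n+1) = t + (k:ℕ) := Nat.mod_eq_of_lt hc
      rw [if_pos (by omega)]
      rcases Nat.lt_or_ge (t + 1 + (k:ℕ)) (n + 2) with hc2 | hc2
      · rw [if_pos (by omega)]
        rw [show t + 1 + (k:ℕ) = (t + (k:ℕ)) + 1 by omega,
          psum_succ x (t + (k:ℕ)) (by omega)]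
        rw [hz]
        have : ((⟨t, ht'⟩ : Fin (n+1)) + k) = ⟨t + (k:ℕ), by omega⟩ := by
          apply Fin.ext
          rw [hval]
          simp only [Fin.val_mk]
          exact hm
        rw [this]
        ring
      · omega
    · -- exactly wraps at this step
      have hm : (t + (k:ℕ)) % (n+1) = 0 := by rw [hc]; simp
      rw [if_pos (by omega), hc, htotal]
      rw [if_neg (by omega)]
      rw [show t + 1 + (k:ℕ) - (n+1) = 1 by omega, psum_succ x 0 (by omega), psum_zero]
      rw [hz]
      have : ((⟨t, ht'⟩ : Fin (n+1)) + k) = ⟨0, by omega⟩ := by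
        apply Fin.ext
        rw [hval]
        simp only [Fin.val_mk]
        exact hm
      rw [this]
      ring
    · -- already wrapped
      have hklt : (k:ℕ) < n + 1 := k.isLt
      have hm : (t + (k:ℕ)) % (n+1) = t + (k:ℕ) - (n+1) := by
        rw [Nat.mod_eq_sub_mod (by omega), Nat.mod_eq_of_lt (by omega)]
      rw [if_neg (by omega), if_neg (by omega)]
      rw [show t + 1 + (k:ℕ) - (n+1) = (t + (k:ℕ) - (n+1)) + 1 by omega,
        psum_succ x (t + (k:ℕ) - (n+1)) (by omega)]
      rw [hz]
      have : ((⟨t, ht'⟩ : Fin (n+1)) + k) = ⟨t + (k:ℕ) - (n+1), by omega⟩ := by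
        apply Fin.ext
        rw [hval]
        simp only [Fin.val_mk]
        exact hm
      rw [this]
      ring

/-- Part 2: the union of the rotated cones is the zero-sum hyperplane. -/
lemma union_eq {n : ℕ} :
    (⋃ k : Fin (n + 1), cyc n k '' posCone (n + 1))
      = {x : Fin (n + 1) → ℝ | ∑ i, x i = 0} := by
  apply Set.Subset.antisymm
  · rintro x ⟨-, ⟨k, rfl⟩, y, hy, rfl⟩
    simpa [sum_cyc] using posCone_sum_eq_zero hy
  · intro x hx
    simp only [Set.mem_setOf_eq] at hx
    -- choose k0 minimizing psum x k0
    obtain ⟨k0, -, hk0⟩ := Finset.exists_min_image (Finset.univ : Finset (Fin (n+1)))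
      (fun k => psum x (k:ℕ)) ⟨0, Finset.mem_univ 0⟩
    have hk0min : ∀ k : Fin (n+1), psum x (k0:ℕ) ≤ psum x (k:ℕ) :=
      fun k => hk0 k (Finset.mem_univ k)
    have hk0zero : psum x (k0:ℕ) ≤ 0 := by
      have := hk0min 0
      simpa [psum_zero] using this
    have htotal : psum x (n+1) = 0 := by rw [psum_of_ge _ _ (le_refl _), hx]
    set y := cyc n k0 x with hy
    have hysum : ∑ i, y i = 0 := by rw [hy, sum_cyc]; exact hx
    have hyp : ∀ t, 0 ≤ psum y t := by
      intro t
      rcases le_or_gt t (n+1) with ht | ht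
      · rw [hy, psum_cyc k0 x hx t ht]
        split
        · rename_i h
          rcases Nat.lt_or_ge (t + (k0:ℕ)) (n+1) with h2 | h2
          · have := hk0min ⟨t + (k0:ℕ), h2⟩
            simp only [Fin.val_mk] at this
            linarith
          · have : t + (k0:ℕ) = n + 1 := by omega
            rw [this, htotal]
            linarith
        · rename_i h
          have h2 : t + (k0:ℕ) - (n+1) < n + 1 := by omega
          have := hk0min ⟨t + (k0:ℕ) - (n+1), h2⟩
          simp only [Fin.val_mk] at this
          linarith
      · rw [psum_of_ge _ _ (by omega), hysum]
    have hymem : y ∈ posCone (n+1) := mem_posCone_of y hysum hyp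
    refine Set.mem_iUnion.2 ⟨-k0, y, hymem, ?_⟩
    rw [hy, cyc_cyc, neg_add_cancel, cyc_zero]

/-- nudge lemma: from an intrinsic interior point one can move backwards along any
direction of the affine span and stay in the set -/
lemma nudge {m : ℕ} {s : Set (Fin m → ℝ)} {x : Fin m → ℝ} {v : Fin m → ℝ}
    (hx : x ∈ intrinsicInterior ℝ s) (hv : v ∈ (affineSpan ℝ s).direction) :
    ∃ ε : ℝ, 0 < ε ∧ x - ε • v ∈ s := by
  rw [intrinsicInterior] at hx
  obtain ⟨y, hy, hyx⟩ := hx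
  have hmem : ∀ t : ℝ, x - t • v ∈ affineSpan ℝ s := by
    intro t
    have h1 : (-t) • v ∈ (affineSpan ℝ s).direction :=
      Submodule.smul_mem _ (-t) hv
    have h2 : x ∈ affineSpan ℝ s := hyx ▸ y.2
    have := AffineSubspace.vadd_mem_of_mem_direction h1 h2
    simpa [neg_smul, vadd_eq_add, neg_add_eq_sub] using this
  set γ : ℝ → (affineSpan ℝ s : Set (Fin m → ℝ)) := fun t => ⟨x - t • v, hmem t⟩ with hγ
  have hcont : Continuous γ := by
    apply Continuous.subtype_mk
    exact continuous_const.sub (continuous_id.smul continuous_const)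
  have hopen : IsOpen (γ ⁻¹' interior ((↑) ⁻¹' s)) :=
    hcont.isOpen_preimage _ isOpen_interior
  have h0 : (0:ℝ) ∈ γ ⁻¹' interior ((↑) ⁻¹' s) := by
    have : γ 0 = y := by
      apply Subtype.ext
      simp [hγ, hyx]
    simp only [Set.mem_preimage, this]
    exact hy
  obtain ⟨ε, hε, hball⟩ := Metric.isOpen_iff.1 hopen 0 h0
  refine ⟨ε/2, by linarith, ?_⟩
  have hb : (ε/2 : ℝ) ∈ Metric.ball (0:ℝ) ε := by
    simp only [Metric.mem_ball, dist_zero_right, Real.norm_eq_abs]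
    rw [abs_of_pos (by linarith : (0:ℝ) < ε/2)]
    linarith
  have := hball hb
  simp only [Set.mem_preimage] at this
  have := interior_subset this
  simpa [hγ] using this

/-- the cyclic prefix functional -/
def Lfun (n : ℕ) (k j : Fin (n+1)) (z : Fin (n+1) → ℝ) : ℝ :=
  ∑ a : Fin (n+1), if a + k ≤ j then z a else 0

lemma Lfun_nonneg {n : ℕ} (k j : Fin (n+1)) {z : Fin (n+1) → ℝ}
    (hz : z ∈ cyc n k '' posCone (n+1)) : 0 ≤ Lfun n k j z := by
  obtain ⟨y, hy, rfl⟩ := hz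
  have : Lfun n k j (cyc n k y) = ∑ b : Fin (n+1), if b ≤ j then y b else 0 := by
    unfold Lfun cyc
    exact Fintype.sum_equiv (Equiv.addRight k) _ _ (fun a => rfl)
  rw [this]
  have : (∑ b : Fin (n+1), if b ≤ j then y b else 0) = psum y ((j:ℕ) + 1) := by
    unfold psum
    apply Finset.sum_congr rfl
    intro b _
    congr 1
    exact propext (by rw [Fin.le_def]; omega)
  rw [this]
  exact posCone_psum_nonneg hy _

lemma Lfun_sub_smul {n : ℕ} (k j : Fin (n+1)) (x v : Fin (n+1) → ℝ) (c : ℝ) :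
    Lfun n k j (x - c • v) = Lfun n k j x - c * Lfun n k j v := by
  unfold Lfun
  have : ∀ a : Fin (n+1), (if a + k ≤ j then (x - c • v) a else 0)
      = (if a + k ≤ j then x a else 0) - c * (if a + k ≤ j then v a else 0) := by
    intro a; split <;> simp
  rw [Finset.sum_congr rfl (fun a _ => this a), Finset.sum_sub_distrib, Finset.mul_sum]

lemma Lfun_rootVec {n : ℕ} (k j : Fin (n+1)) (p q : Fin (n+1)) :
    Lfun n k j (rootVec (n+1) (p, q))
      = (if p + k ≤ j then (1:ℝ) else 0) - (if q + k ≤ j then 1 else 0) := by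
  unfold Lfun
  have : ∀ a : Fin (n+1), (if a + k ≤ j then rootVec (n+1) (p,q) a else 0)
      = (if a + k ≤ j then (1:ℝ) else 0) * rootVec (n+1) (p,q) a := by
    intro a; split <;> simp
  rw [Finset.sum_congr rfl (fun a _ => this a)]
  unfold rootVec
  simp only [mul_sub]
  rw [Finset.sum_sub_distrib]
  congr 1
  · rw [Finset.sum_eq_single p] <;> simp +contextual
  · rw [Finset.sum_eq_single q] <;> simp +contextual

lemma cyc_rootVec {n : ℕ} (k : Fin (n+1)) (p q : Fin (n+1)) :
    cyc n k (rootVec (n+1) (p + k, q + k)) = rootVec (n+1) (p, q) := by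
  funext i
  simp only [cyc, rootVec]
  congr 1 <;> · congr 1; simp [add_left_inj]

lemma rootVec_mem_direction {n : ℕ} (k : Fin (n+1)) (p q : Fin (n+1)) (hpq : p ≠ q) :
    rootVec (n+1) (p, q) ∈ (affineSpan ℝ (cyc n k '' posCone (n+1))).direction := by
  have h0 : (0 : Fin (n+1) → ℝ) ∈ cyc n k '' posCone (n+1) :=
    ⟨0, posCone_zero _, by funext i; simp [cyc]⟩
  have hne : p + k ≠ q + k := fun h => hpq (by simpa using h)
  rcases lt_or_gt_of_ne hne with h | h
  · have hmem : rootVec (n+1) (p, q) ∈ cyc n k '' posCone (n+1) :=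
      ⟨rootVec (n+1) (p + k, q + k), rootVec_mem_posCone h, cyc_rootVec k p q⟩
    have := AffineSubspace.vsub_mem_direction
      (mem_affineSpan ℝ hmem) (mem_affineSpan ℝ h0)
    simpa using this
  · have hmem : rootVec (n+1) (q, p) ∈ cyc n k '' posCone (n+1) :=
      ⟨rootVec (n+1) (q + k, p + k), rootVec_mem_posCone h, cyc_rootVec k q p⟩
    have := AffineSubspace.vsub_mem_direction (mem_affineSpan ℝ h0)
      (mem_affineSpan ℝ hmem)
    have heq : rootVec (n+1) (p, q) = (0 : Fin (n+1) → ℝ) -ᵥ rootVec (n+1) (q, p) := by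
      funext i
      simp only [rootVec, vsub_eq_sub, Pi.sub_apply, Pi.zero_apply]
      ring
    rw [heq]
    exact this

lemma interior_pos {n : ℕ} (k j : Fin (n+1)) (hj : j ≠ Fin.last n)
    {x : Fin (n+1) → ℝ}
    (hx : x ∈ intrinsicInterior ℝ (cyc n k '' posCone (n+1))) :
    0 < Lfun n k j x := by
  have hn : n ≠ 0 := by
    rintro rfl
    exact hj (Fin.ext (by omega))
  set p : Fin (n+1) := -k with hp
  set q : Fin (n+1) := Fin.last n - k with hq
  have hlast : (Fin.last n : Fin (n+1)) ≠ 0 := by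
    simp [Fin.ext_iff, Fin.last]
    omega
  have hpq : p ≠ q := by
    intro h
    rw [hp, hq] at h
    apply hlast
    have h2 := congrArg (· + k) h
    simp only [neg_add_cancel, sub_add_cancel] at h2
    exact h2.symm
  have hv := rootVec_mem_direction k p q hpq
  obtain ⟨ε, hε, hmem⟩ := nudge hx hv
  have hLv : Lfun n k j (rootVec (n+1) (p, q)) = 1 := by
    rw [Lfun_rootVec]
    have h1 : p + k = 0 := by rw [hp]; group
    have h2 : q + k = Fin.last n := by rw [hq]; abel
    rw [h1, h2, if_pos (Fin.zero_le j), if_neg]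
    · norm_num
    · intro hle
      exact hj (le_antisymm (Fin.le_last j) hle)
  have h0 := Lfun_nonneg k j hmem
  rw [Lfun_sub_smul, hLv, mul_one] at h0
  linarith

lemma partition_lemma {n : ℕ} (k l : Fin (n+1)) (hkl : k ≠ l) :
    ∃ j j' : Fin (n+1), j ≠ Fin.last n ∧ j' ≠ Fin.last n ∧
      ∀ a : Fin (n+1), (a + k ≤ j ↔ ¬ (a + l ≤ j')) := by
  obtain ⟨d, hd⟩ : ∃ d : ℕ, d = ((l - k : Fin (n+1)) : ℕ) := ⟨_, rfl⟩
  have hd1 : 1 ≤ d := by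
    rcases Nat.eq_zero_or_pos d with h | h
    · exfalso
      apply hkl
      have h0 : l - k = 0 := Fin.ext (by rw [← hd, h]; rfl)
      exact (sub_eq_zero.mp h0).symm
    · exact h
  have hd2 : d < n + 1 := hd ▸ (l - k).isLt
  refine ⟨⟨n - d, by omega⟩, ⟨d - 1, by omega⟩, ?_, ?_, ?_⟩
  · simp [Fin.ext_iff, Fin.last]
    omega
  · simp [Fin.ext_iff, Fin.last]
    omega
  · intro a
    have hl' : (l : ℕ) = ((k : ℕ) + d) % (n+1) := by
      have h0 : k + (l - k) = l := by abel
      rw [← h0, Fin.val_add, hd]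
    rw [Fin.le_def, Fin.le_def, Fin.val_add, Fin.val_add, Fin.val_mk, Fin.val_mk, hl']
    have e1 : ((a : ℕ) + ((k : ℕ) + d) % (n+1)) % (n+1)
        = (((a : ℕ) + (k : ℕ)) % (n+1) + d) % (n+1) := by
      rw [Nat.add_mod_mod, Nat.mod_add_mod, Nat.add_assoc]
    rw [e1]
    set c : ℕ := ((a : ℕ) + (k : ℕ)) % (n+1) with hc
    have hcm : c < n + 1 := Nat.mod_lt _ (by omega)
    rcases lt_or_ge (c + d) (n+1) with h | h
    · rw [Nat.mod_eq_of_lt h]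
      simp only [Fin.val_mk]
      omega
    · rw [Nat.mod_eq_sub_mod h, Nat.mod_eq_of_lt (by omega)]
      simp only [Fin.val_mk]
      omega

/-- Lemma 3.11. The cones `𝒞, ω𝒞, ..., ω^n𝒞`, images of the
positive root cone `𝒞 = 𝒞(K_{n+1}^+)` under powers of the cyclic coordinate
permutation, have pairwise disjoint interiors relative to `V_∅` (i.e. disjoint
intrinsic interiors), and their union is all of `V_∅ = {x : Σ x i = 0}`. -/
theorem cyclic_images_cover (n : ℕ) :
    (∀ k l : Fin (n + 1), k ≠ l →
      Disjoint (intrinsicInterior ℝ (cyc n k '' posCone (n + 1)))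
        (intrinsicInterior ℝ (cyc n l '' posCone (n + 1)))) ∧
    (⋃ k : Fin (n + 1), cyc n k '' posCone (n + 1))
      = {x : Fin (n + 1) → ℝ | ∑ i, x i = 0} := by
  constructor
  · intro k l hkl
    rw [Set.disjoint_left]
    intro x hxk hxl
    obtain ⟨j, j', hj, hj', hpart⟩ := partition_lemma k l hkl
    have h1 := interior_pos k j hj hxk
    have h2 := interior_pos l j' hj' hxl
    have hxmem : x ∈ cyc n k '' posCone (n+1) := intrinsicInterior_subset hxk
    have hsum : ∑ i, x i = 0 := by
      obtain ⟨y, hy, rfl⟩ := hxmem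
      simpa [sum_cyc] using posCone_sum_eq_zero hy
    have hadd : Lfun n k j x + Lfun n l j' x = ∑ i, x i := by
      unfold Lfun
      rw [← Finset.sum_add_distrib]
      apply Finset.sum_congr rfl
      intro a _
      by_cases h : a + k ≤ j
      · rw [if_pos h, if_neg (fun hq => ((hpart a).mp h) hq)]
        ring
      · have hQ : a + l ≤ j' := by
          by_contra hq
          exact h ((hpart a).mpr hq)
        rw [if_neg h, if_pos hQ]
        ring
    linarith
  · exact union_eq
end

section
/- The number of chambers of the rank-n resonance arrangement equals (n+1) times the number of chambers of the resonance arrangement contained in the positive root cone 𝒞(K_{n+1}^+): writing R_n^+ for the number of connected components of V_∅ \ ⋃_{∅≠S⊆[n]} U'_S that are contained in 𝒞(K_{n+1}^+), one has R_n = (n+1)·R_n^+. (Corollary 3.12.) -/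
open Finset

namespace ResAux

variable {n : ℕ}

open Fin.NatCast

noncomputable section

/-- The sequence `x` read cyclically, indexed by `ℕ`. -/
def yy (n : ℕ) (x : Fin (n + 1) → ℝ) : ℕ → ℝ := fun m => x (m : Fin (n + 1))

/-- Prefix sums of the cyclic reading of `x`. -/
def SS (n : ℕ) (x : Fin (n + 1) → ℝ) : ℕ → ℝ := fun m => ∑ i ∈ Finset.range m, yy n x i

lemma yy_add_p (x : Fin (n + 1) → ℝ) (m : ℕ) : yy n x (m + (n + 1)) = yy n x m := by
  simp [yy]

lemma sum_Iio_eq_SS (x : Fin (n + 1) → ℝ) (j : Fin (n + 1)) :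
    ∑ i ∈ Finset.Iio j, x i = SS n x j.val := by
  have h : SS n x j.val = ∑ m ∈ ((Finset.Iio j).map Fin.valEmbedding), yy n x m := by
    rw [Fin.map_valEmbedding_Iio, SS, Finset.range_eq_Ico, Nat.Iio_eq_range, Finset.range_eq_Ico]
  rw [h, Finset.sum_map]
  refine Finset.sum_congr rfl fun i _ => ?_
  simp [yy, Fin.valEmbedding, Fin.cast_val_eq_self]

lemma sum_Ico_eq_SS (x : Fin (n + 1) → ℝ) (a b : Fin (n + 1)) (hab : a ≤ b) :
    ∑ i ∈ Finset.Ico a b, x i = SS n x b.val - SS n x a.val := by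
  have h : ∑ m ∈ ((Finset.Ico a b).map Fin.valEmbedding), yy n x m
      = SS n x b.val - SS n x a.val := by
    rw [Fin.map_valEmbedding_Ico]
    exact Finset.sum_Ico_eq_sub _ hab
  rw [← h, Finset.sum_map]
  refine Finset.sum_congr rfl fun i _ => ?_
  simp [yy, Fin.valEmbedding, Fin.cast_val_eq_self]

lemma last_not_mem_Iio (j : Fin (n + 1)) : Fin.last n ∉ Finset.Iio j := by
  simp only [Finset.mem_Iio]
  exact fun h => absurd h (not_lt.2 (Fin.le_last j))

lemma last_not_mem_Ico (a b : Fin (n + 1)) : Fin.last n ∉ Finset.Ico a b := by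
  simp only [Finset.mem_Ico]
  rintro ⟨-, h⟩
  exact absurd h (not_lt.2 (Fin.le_last b))

/-- Symmetric characterization of membership in the complement of the
resonance arrangement. -/
lemma mem_resCompl_iff (x : Fin (n + 1) → ℝ) :
    x ∈ resCompl n ↔ ((∑ i, x i = 0) ∧
      ∀ S : Finset (Fin (n + 1)), S.Nonempty → S ≠ Finset.univ → ∑ i ∈ S, x i ≠ 0) := by
  constructor
  · rintro ⟨h0, h⟩
    refine ⟨h0, fun S hS hSu => ?_⟩
    by_cases hl : Fin.last n ∈ S
    · have hc : Sᶜ.Nonempty := by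
        rw [← Finset.card_pos, Finset.card_compl, tsub_pos_iff_lt]
        exact lt_of_le_of_ne (Finset.card_le_univ S) (fun hcard => hSu (Finset.eq_univ_of_card S (by simpa using hcard)))
      have hlc : Fin.last n ∉ Sᶜ := by simpa using hl
      have hne := h Sᶜ hc hlc
      have hsum : ∑ i ∈ S, x i + ∑ i ∈ Sᶜ, x i = 0 := by
        rw [Finset.sum_add_sum_compl, h0]
      intro h1
      exact hne (by linarith)
    · exact h S hS hl
  · rintro ⟨h0, h⟩
    refine ⟨h0, fun S hS hl => h S hS fun hu => hl (hu ▸ Finset.mem_univ _)⟩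

lemma comp_perm_mem_resCompl {x : Fin (n + 1) → ℝ} (hx : x ∈ resCompl n)
    (e : Equiv.Perm (Fin (n + 1))) : x ∘ e ∈ resCompl n := by
  rw [mem_resCompl_iff] at hx ⊢
  obtain ⟨h0, h⟩ := hx
  constructor
  · rw [← h0]
    exact Equiv.sum_comp e x
  · intro S hS hSu
    have himg : ∑ i ∈ S, (x ∘ e) i = ∑ j ∈ S.image e, x j := by
      rw [Finset.sum_image (fun a _ b _ hab => e.injective hab)]
      rfl
    rw [himg]
    refine h _ (hS.image e) fun hu => hSu ?_
    apply Finset.eq_univ_of_card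
    have := Finset.card_image_of_injective S e.injective
    rw [hu] at this
    simpa using this.symm

/-- Cyclic rotation of a point by `k`. -/
def rot (k : Fin (n + 1)) (x : Fin (n + 1) → ℝ) : Fin (n + 1) → ℝ := fun i => x (i + k)

lemma rot_eq_comp (k : Fin (n + 1)) (x : Fin (n + 1) → ℝ) :
    rot k x = x ∘ (Equiv.addRight k) := rfl

lemma rot_mem_resCompl {x : Fin (n + 1) → ℝ} (hx : x ∈ resCompl n) (k : Fin (n + 1)) :
    rot k x ∈ resCompl n := by
  rw [rot_eq_comp]
  exact comp_perm_mem_resCompl hx _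

lemma rot_rot (a b : Fin (n + 1)) (x : Fin (n + 1) → ℝ) :
    rot a (rot b x) = rot (a + b) x := by
  funext i
  simp [rot, add_assoc]

lemma rot_zero (x : Fin (n + 1) → ℝ) : rot 0 x = x := by
  funext i
  simp [rot]

lemma SS_p {x : Fin (n + 1) → ℝ} (h0 : ∑ i, x i = 0) : SS n x (n + 1) = 0 := by
  have : SS n x (n + 1) = ∑ i : Fin (n + 1), yy n x i.val := by
    rw [SS, ← Fin.sum_univ_eq_sum_range]
  rw [this, ← h0]
  exact Finset.sum_congr rfl fun i _ => by simp [yy, Fin.cast_val_eq_self]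

lemma period_block {x : Fin (n + 1) → ℝ} (h0 : ∑ i, x i = 0) (a : ℕ) :
    ∑ i ∈ Finset.range (n + 1), yy n x (a + i) = 0 := by
  induction a with
  | zero => simpa [SS] using SS_p h0
  | succ a ih =>
    have h1 : ∑ i ∈ Finset.range (n + 1 + 1), yy n x (a + i)
        = (∑ i ∈ Finset.range (n + 1), yy n x (a + i)) + yy n x (a + (n + 1)) :=
      Finset.sum_range_succ _ _
    have h2 : ∑ i ∈ Finset.range (n + 1 + 1), yy n x (a + i)
        = (∑ i ∈ Finset.range (n + 1), yy n x (a + (i + 1))) + yy n x (a + 0) :=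
      Finset.sum_range_succ' _ _
    have h3 : ∑ i ∈ Finset.range (n + 1), yy n x (a + (i + 1))
        = ∑ i ∈ Finset.range (n + 1), yy n x (a + 1 + i) := by
      refine Finset.sum_congr rfl fun i _ => ?_
      ring_nf
    rw [yy_add_p] at h1
    rw [h3] at h2
    simp only [Nat.add_zero] at h2
    linarith [ih, h1, h2]

lemma SS_add_p {x : Fin (n + 1) → ℝ} (h0 : ∑ i, x i = 0) (t : ℕ) :
    SS n x (t + (n + 1)) = SS n x t := by
  have h1 : ∑ i ∈ Finset.Ico t (t + (n + 1)), yy n x i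
      = SS n x (t + (n + 1)) - SS n x t :=
    Finset.sum_Ico_eq_sub _ (Nat.le_add_right _ _)
  have h2 : ∑ i ∈ Finset.Ico t (t + (n + 1)), yy n x i
      = ∑ i ∈ Finset.range (n + 1), yy n x (t + i) := by
    rw [Finset.sum_Ico_eq_sum_range]
    simp
  rw [h2, period_block h0] at h1
  linarith

lemma SS_mod {x : Fin (n + 1) → ℝ} (h0 : ∑ i, x i = 0) (t : ℕ) :
    SS n x t = SS n x (t % (n + 1)) := by
  induction t using Nat.strong_induction_on with
  | _ t ih =>
    by_cases h : t < n + 1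
    · rw [Nat.mod_eq_of_lt h]
    · push_neg at h
      have h1 : t = (t - (n + 1)) + (n + 1) := by omega
      have h2 : t % (n + 1) = (t - (n + 1)) % (n + 1) := by
        conv_lhs => rw [h1]
        simp [Nat.add_mod_right]
      rw [h2, ← ih (t - (n + 1)) (by omega)]
      conv_lhs => rw [h1]
      exact SS_add_p h0 _

/-- The prefix-sum function, indexed by `Fin (n+1)`. -/
def QQ (n : ℕ) (x : Fin (n + 1) → ℝ) : Fin (n + 1) → ℝ := fun j => SS n x j.val

lemma QQ_injective {x : Fin (n + 1) → ℝ} (hx : x ∈ resCompl n) :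
    Function.Injective (QQ n x) := by
  have key : ∀ a b : Fin (n + 1), a < b → QQ n x a ≠ QQ n x b := by
    intro a b hab heq
    have hsum : ∑ i ∈ Finset.Ico a b, x i = 0 := by
      rw [sum_Ico_eq_SS x a b (le_of_lt hab)]
      simp only [QQ] at heq
      linarith [heq]
    exact hx.2 (Finset.Ico a b) (by rwa [Finset.nonempty_Ico]) (last_not_mem_Ico a b) hsum
  intro a b heq
  by_contra hne
  rcases lt_or_gt_of_ne hne with h | h
  · exact key a b h heq
  · exact key b a h heq.symm

lemma SS_rot {x : Fin (n + 1) → ℝ} (h0 : ∑ i, x i = 0) (k : Fin (n + 1)) (j : Fin (n + 1)) :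
    SS n (rot k x) j.val = QQ n x (j + k) - QQ n x k := by
  have h1 : ∀ m : ℕ, yy n (rot k x) m = yy n x (k.val + m) := by
    intro m
    simp only [yy, rot]
    congr 1
    have : ((k.val + m : ℕ) : Fin (n + 1)) = (m : Fin (n + 1)) + k := by
      push_cast
      exact add_comm _ _
    rw [this]
  have h2 : SS n (rot k x) j.val = ∑ m ∈ Finset.range j.val, yy n x (k.val + m) := by
    rw [SS]
    exact Finset.sum_congr rfl fun m _ => h1 m
  have h3 : ∑ m ∈ Finset.range j.val, yy n x (k.val + m)
      = ∑ m ∈ Finset.Ico k.val (k.val + j.val), yy n x m := by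
    rw [Finset.sum_Ico_eq_sum_range]
    simp
  have h4 : ∑ m ∈ Finset.Ico k.val (k.val + j.val), yy n x m
      = SS n x (k.val + j.val) - SS n x k.val :=
    Finset.sum_Ico_eq_sub _ (Nat.le_add_right _ _)
  have h5 : SS n x (k.val + j.val) = QQ n x (j + k) := by
    rw [SS_mod h0, QQ, Fin.val_add]
    congr 1
    rw [Nat.add_comm]
  rw [h2, h3, h4, h5]
  simp [QQ]

/-- A point all of whose proper prefix sums are strictly positive. -/
def posFun (n : ℕ) (x : Fin (n + 1) → ℝ) : Prop :=
  ∀ j : Fin (n + 1), j ≠ 0 → 0 < ∑ i ∈ Finset.Iio j, x i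

lemma rot_posFun_iff {x : Fin (n + 1) → ℝ} (hx : x ∈ resCompl n) (k : Fin (n + 1)) :
    posFun n (rot k x) ↔ ∀ t : Fin (n + 1), t ≠ k → QQ n x k < QQ n x t := by
  constructor
  · intro h t ht
    have hj : t - k ≠ 0 := fun h' => ht (by
      have := congrArg (· + k) h'
      simpa [sub_add_cancel] using this)
    have := h (t - k) hj
    rw [sum_Iio_eq_SS, SS_rot hx.1, sub_add_cancel] at this
    linarith
  · intro h j hj
    rw [sum_Iio_eq_SS, SS_rot hx.1]
    have : j + k ≠ k := fun h' => hj (by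
      have := congrArg (· - k) h'
      simpa using this)
    linarith [h (j + k) this]

lemma exists_unique_rot_posFun {x : Fin (n + 1) → ℝ} (hx : x ∈ resCompl n) :
    ∃! k : Fin (n + 1), posFun n (rot k x) := by
  obtain ⟨m, -, hm⟩ := Finset.exists_min_image Finset.univ (QQ n x) ⟨0, Finset.mem_univ 0⟩
  have hmin : ∀ t : Fin (n + 1), t ≠ m → QQ n x m < QQ n x t := fun t ht =>
    lt_of_le_of_ne (hm t (Finset.mem_univ t)) fun h => ht (QQ_injective hx h.symm)
  refine ⟨m, (rot_posFun_iff hx m).2 hmin, fun k hk => ?_⟩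
  have hk' := (rot_posFun_iff hx k).1 hk
  by_contra hne
  exact absurd (hk' m (Ne.symm hne)) (not_lt.2 (le_of_lt (hmin k hne)))

lemma sum_rootVec (a : Fin (n + 1) × Fin (n + 1)) : ∑ i, rootVec (n + 1) a i = 0 := by
  simp [rootVec, Finset.sum_sub_distrib]

lemma sum_Iio_rootVec (j : Fin (n + 1)) (a : Fin (n + 1) × Fin (n + 1)) :
    ∑ i ∈ Finset.Iio j, rootVec (n + 1) a i
      = (if a.1 < j then (1 : ℝ) else 0) - (if a.2 < j then (1 : ℝ) else 0) := by
  simp [rootVec, Finset.sum_sub_distrib, Finset.sum_ite_eq']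

lemma mem_posArcs_iff (a : Fin (n + 1) × Fin (n + 1)) :
    a ∈ posArcs (n + 1) ↔ a.1 < a.2 := by
  simp [posArcs]

/-- Characterization of the positive root cone by prefix sums. -/
lemma mem_posCone_iff (x : Fin (n + 1) → ℝ) :
    x ∈ posCone (n + 1) ↔
      ((∑ i, x i = 0) ∧ ∀ j : Fin (n + 1), 0 ≤ ∑ i ∈ Finset.Iio j, x i) := by
  constructor
  · rintro ⟨f, hf, rfl⟩
    have happ : ∀ i, (∑ a ∈ posArcs (n + 1), f a • rootVec (n + 1) a) i
        = ∑ a ∈ posArcs (n + 1), f a * rootVec (n + 1) a i := by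
      intro i
      rw [Finset.sum_apply]
      rfl
    constructor
    · simp only [happ]
      rw [Finset.sum_comm]
      refine Finset.sum_eq_zero fun a _ => ?_
      rw [← Finset.mul_sum, sum_rootVec, mul_zero]
    · intro j
      simp only [happ]
      rw [Finset.sum_comm]
      refine Finset.sum_nonneg fun a ha => ?_
      rw [← Finset.mul_sum, sum_Iio_rootVec]
      rw [mem_posArcs_iff] at ha
      refine mul_nonneg (hf a) ?_
      by_cases h2 : a.2 < j
      · have h1 : a.1 < j := lt_trans ha h2
        simp [h1, h2]
      · by_cases h1 : a.1 < j <;> simp [h1, h2]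
  · rintro ⟨h0, hpre⟩
    classical
    set f : Fin (n + 1) × Fin (n + 1) → ℝ :=
      fun a => if a.1.val + 1 = a.2.val then ∑ i ∈ Finset.Iio a.2, x i else 0 with hfdef
    refine ⟨f, fun a => ?_, ?_⟩
    · by_cases h : a.1.val + 1 = a.2.val
      · simpa [hfdef, h] using hpre a.2
      · simp [hfdef, h]
    · funext k
      have happ : (∑ a ∈ posArcs (n + 1), f a • rootVec (n + 1) a) k
          = ∑ a ∈ posArcs (n + 1), f a * rootVec (n + 1) a k := by
        rw [Finset.sum_apply]
        rfl
      rw [happ]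
      simp only [rootVec, mul_sub]
      rw [Finset.sum_sub_distrib]
      have hA : ∑ a ∈ posArcs (n + 1), f a * (if k = a.1 then (1 : ℝ) else 0)
          = if k = Fin.last n then 0 else SS n x (k.val + 1) := by
        by_cases hk : k = Fin.last n
        · rw [if_pos hk]
          refine Finset.sum_eq_zero fun a ha => ?_
          rw [mem_posArcs_iff] at ha
          by_cases h : k = a.1
          · exact absurd (h ▸ ha) (not_lt.2 (hk ▸ Fin.le_last a.2))
          · simp [h]
        · rw [if_neg hk]
          have hklt : k < Fin.last n := lt_of_le_of_ne (Fin.le_last k) hk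
          have hk1 : (k + 1).val = k.val + 1 := Fin.val_add_one_of_lt hklt
          have hmem : (k, k + 1) ∈ posArcs (n + 1) := by
            rw [mem_posArcs_iff]
            exact Fin.lt_add_one_iff.2 hklt
          rw [Finset.sum_eq_single_of_mem (k, k + 1) hmem]
          · rw [if_pos rfl, mul_one, hfdef]
            simp only [hk1, eq_self_iff_true, if_true]
            rw [sum_Iio_eq_SS, hk1]
          · intro b hb hbne
            by_cases h : k = b.1
            · have hf0 : f b = 0 := by
                rw [hfdef]
                simp only
                rw [if_neg]
                intro hb2
                apply hbne
                have : b.2 = k + 1 := Fin.ext (by omega)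
                exact Prod.ext h.symm this
              rw [hf0, zero_mul]
            · simp [h]
      have hB : ∑ a ∈ posArcs (n + 1), f a * (if k = a.2 then (1 : ℝ) else 0)
          = SS n x k.val := by
        by_cases hk : k = 0
        · have : SS n x k.val = 0 := by
            rw [hk]
            simp [SS]
          rw [this]
          refine Finset.sum_eq_zero fun a ha => ?_
          rw [mem_posArcs_iff] at ha
          by_cases h : k = a.2
          · exact absurd (h ▸ ha) (by rw [hk]; exact Fin.not_lt_zero a.1)
          · simp [h]
        · have hkv : k.val ≠ 0 := fun h => hk (Fin.ext (by simpa using h))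
          set km : Fin (n + 1) := ⟨k.val - 1, by omega⟩ with hkm
          have hmem : (km, k) ∈ posArcs (n + 1) := by
            rw [mem_posArcs_iff]
            exact Fin.lt_def.2 (by show k.val - 1 < k.val; omega)
          rw [Finset.sum_eq_single_of_mem (km, k) hmem]
          · rw [if_pos rfl, mul_one, hfdef]
            simp only [hkm]
            rw [if_pos (show k.val - 1 + 1 = k.val by omega)]
            rw [sum_Iio_eq_SS]
          · intro b hb hbne
            by_cases h : k = b.2
            · have hf0 : f b = 0 := by
                rw [hfdef]
                simp only
                rw [if_neg]
                intro hb2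
                apply hbne
                have : b.1 = km := Fin.ext (by simp [hkm]; omega)
                exact Prod.ext this h.symm
              rw [hf0, zero_mul]
            · simp [h]
      rw [hA, hB]
      by_cases hk : k = Fin.last n
      · rw [if_pos hk]
        have hSp := SS_p h0
        have hsucc : SS n x (n + 1) = SS n x n + yy n x n := Finset.sum_range_succ _ _
        have hyy : yy n x n = x k := by
          rw [yy, hk]
          congr 1
          exact Fin.natCast_eq_last n
        have hkv : k.val = n := by rw [hk]; rfl
        rw [hkv]
        rw [hSp, hyy] at hsucc
        linarith
      · rw [if_neg hk]
        have hsucc : SS n x (k.val + 1) = SS n x k.val + yy n x k.val :=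
          Finset.sum_range_succ _ _
        have hyy : yy n x k.val = x k := by
          rw [yy, Fin.cast_val_eq_self]
        rw [hsucc, hyy]
        ring

lemma resCompl_sum_Iio_ne {x : Fin (n + 1) → ℝ} (hx : x ∈ resCompl n)
    {j : Fin (n + 1)} (hj : j ≠ 0) : ∑ i ∈ Finset.Iio j, x i ≠ 0 :=
  hx.2 (Finset.Iio j) ⟨0, Finset.mem_Iio.2 (Fin.pos_of_ne_zero hj)⟩ (last_not_mem_Iio j)

lemma posCone_iff_posFun {x : Fin (n + 1) → ℝ} (hx : x ∈ resCompl n) :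
    x ∈ posCone (n + 1) ↔ posFun n x := by
  rw [mem_posCone_iff]
  constructor
  · rintro ⟨-, h⟩ j hj
    exact lt_of_le_of_ne (h j) (Ne.symm (resCompl_sum_Iio_ne hx hj))
  · intro h
    refine ⟨hx.1, fun j => ?_⟩
    by_cases hj : j = 0
    · have he : Finset.Iio (0 : Fin (n + 1)) = ∅ := by
        ext i
        simp [Fin.not_lt_zero]
      rw [hj, he]
      simp
    · exact le_of_lt (h j hj)

/-- Sign transfer along connected components. -/
lemma posFun_congr {z z' : ↥(resCompl n)}
    (h : ConnectedComponents.mk z = ConnectedComponents.mk z')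
    (hz : posFun n (z : Fin (n + 1) → ℝ)) : posFun n (z' : Fin (n + 1) → ℝ) := by
  intro j hj
  set g : ↥(resCompl n) → ℝ := fun w => ∑ i ∈ Finset.Iio j, (w : Fin (n + 1) → ℝ) i with hg
  have hgc : Continuous g :=
    continuous_finset_sum _ fun i _ => (continuous_apply i).comp continuous_subtype_val
  have hmem : z' ∈ connectedComponent z := ConnectedComponents.coe_eq_coe'.1 h.symm
  by_contra hneg
  push_neg at hneg
  have hgz' : g z' < 0 :=
    lt_of_le_of_ne hneg (resCompl_sum_Iio_ne z'.2 hj)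
  have hgz : 0 < g z := hz j hj
  have hsub : Set.Icc (g z') (g z) ⊆ g '' connectedComponent z :=
    isPreconnected_connectedComponent.intermediate_value hmem mem_connectedComponent
      hgc.continuousOn
  obtain ⟨w, -, hw0⟩ := hsub ⟨le_of_lt hgz', le_of_lt hgz⟩
  exact resCompl_sum_Iio_ne w.2 hj hw0

/-- Rotation as a self-map of the subtype. -/
def rotX (k : Fin (n + 1)) : ↥(resCompl n) → ↥(resCompl n) :=
  fun z => ⟨rot k (z : Fin (n + 1) → ℝ), rot_mem_resCompl z.2 k⟩

lemma continuous_rotX (k : Fin (n + 1)) : Continuous (rotX (n := n) k) := by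
  refine Continuous.subtype_mk ?_ _
  exact continuous_pi fun i => (continuous_apply (i + k)).comp continuous_subtype_val

lemma rotX_rotX (a b : Fin (n + 1)) (z : ↥(resCompl n)) :
    rotX a (rotX b z) = rotX (a + b) z := Subtype.ext (rot_rot a b _)

lemma rotX_zero (z : ↥(resCompl n)) : rotX 0 z = z := Subtype.ext (rot_zero _)

/-- Rotation induced on connected components. -/
noncomputable def cmap (k : Fin (n + 1)) :
    ConnectedComponents ↥(resCompl n) → ConnectedComponents ↥(resCompl n) :=
  (ConnectedComponents.continuous_coe.comp (continuous_rotX k)).connectedComponentsLift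

lemma cmap_mk (k : Fin (n + 1)) (z : ↥(resCompl n)) :
    cmap k (ConnectedComponents.mk z) = ConnectedComponents.mk (rotX k z) :=
  Continuous.connectedComponentsLift_apply_coe _ z

lemma cmap_cmap (a b : Fin (n + 1)) (c : ConnectedComponents ↥(resCompl n)) :
    cmap a (cmap b c) = cmap (a + b) c := by
  obtain ⟨z, rfl⟩ := ConnectedComponents.surjective_coe c
  rw [cmap_mk, cmap_mk, cmap_mk, rotX_rotX]

lemma cmap_zero (c : ConnectedComponents ↥(resCompl n)) : cmap 0 c = c := by
  obtain ⟨z, rfl⟩ := ConnectedComponents.surjective_coe c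
  rw [cmap_mk, rotX_zero]

end

end ResAux

open ResAux

/-- Corollary 3.12. The number of chambers of the rank-`n`
resonance arrangement equals `(n+1)` times the number of its chambers that are
contained in the positive root cone `𝒞(K_{n+1}^+)`. -/
theorem resonance_chambers_cyclic_count (n : ℕ) :
    Nat.card (ConnectedComponents ↥(resCompl n)) =
      (n + 1) * Nat.card {c : ConnectedComponents ↥(resCompl n) //
        ∀ x : ↥(resCompl n), ConnectedComponents.mk x = c →
          (x : Fin (n + 1) → ℝ) ∈ posCone (n + 1)} := by
  classical
  set K := {c : ConnectedComponents ↥(resCompl n) //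
        ∀ x : ↥(resCompl n), ConnectedComponents.mk x = c →
          (x : Fin (n + 1) → ℝ) ∈ posCone (n + 1)} with hK
  let F : Fin (n + 1) × K → ConnectedComponents ↥(resCompl n) :=
    fun q => cmap (-q.1) q.2.val
  have hF : ∀ q : Fin (n + 1) × K, F q = cmap (-q.1) q.2.val := fun _ => rfl
  have hinj : Function.Injective F := by
    rintro ⟨k, c, hc⟩ ⟨k', c', hc'⟩ heq
    rw [hF, hF] at heq
    dsimp only at heq
    obtain ⟨z, hz⟩ := ConnectedComponents.surjective_coe c
    obtain ⟨z', hz'⟩ := ConnectedComponents.surjective_coe c'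
    rw [← hz, ← hz', cmap_mk, cmap_mk] at heq
    have heq2 := congrArg (cmap k) heq
    rw [cmap_mk, cmap_mk, rotX_rotX, rotX_rotX] at heq2
    have hzz : ConnectedComponents.mk z = ConnectedComponents.mk (rotX (k + -k') z') := by
      rw [← heq2]
      congr 1
      rw [add_neg_cancel, rotX_zero]
    have hposz : posFun n (z : Fin (n + 1) → ℝ) :=
      (posCone_iff_posFun z.2).1 (hc z hz)
    have hposz' : posFun n (z' : Fin (n + 1) → ℝ) :=
      (posCone_iff_posFun z'.2).1 (hc' z' hz')
    have hpos2 : posFun n (rot (k + -k') (z' : Fin (n + 1) → ℝ)) :=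
      posFun_congr hzz hposz
    obtain ⟨m, -, hmu⟩ := exists_unique_rot_posFun z'.2
    have e1 : k + -k' = m := hmu _ hpos2
    have e2 : (0 : Fin (n + 1)) = m := hmu 0 (by
      show posFun n (rot 0 (z' : Fin (n + 1) → ℝ))
      rw [rot_zero]
      exact hposz')
    have hkk : k = k' := by
      have : k + -k' = 0 := e1.trans e2.symm
      have h2 := congrArg (· + k') this
      simpa [add_assoc, neg_add_cancel] using h2
    subst hkk
    have heq3 := congrArg (cmap k) heq
    rw [cmap_mk, cmap_mk, rotX_rotX, rotX_rotX, add_neg_cancel, rotX_zero, rotX_zero] at heq3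
    have hcc : c = c' := by rw [← hz, ← hz', heq3]
    simp [hcc]
  have hsurj : Function.Surjective F := by
    intro c
    obtain ⟨z, hz⟩ := ConnectedComponents.surjective_coe c
    obtain ⟨m, hm, -⟩ := exists_unique_rot_posFun z.2
    have hm' : posFun n ((rotX m z : ↥(resCompl n)) : Fin (n + 1) → ℝ) := hm
    have hKmem : ∀ x : ↥(resCompl n),
        ConnectedComponents.mk x = ConnectedComponents.mk (rotX m z) →
          (x : Fin (n + 1) → ℝ) ∈ posCone (n + 1) := by
      intro x hx
      exact (posCone_iff_posFun x.2).2 (posFun_congr hx.symm hm')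
    refine ⟨(m, ⟨ConnectedComponents.mk (rotX m z), hKmem⟩), ?_⟩
    rw [hF]
    simp only
    rw [cmap_mk, rotX_rotX, neg_add_cancel, rotX_zero, hz]
  have hcard := Nat.card_congr (Equiv.ofBijective F ⟨hinj, hsurj⟩)
  rw [Nat.card_prod, Nat.card_eq_fintype_card, Fintype.card_fin] at hcard
  exact hcard.symm
end
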